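/- arXiv:2005.06652 — 7 statements merged into one kernel-verified Lean document; each statement's English description precedes it below -/
import Mathlib

section
/- Let n ≥ 2 and let Γ be a group that admits a transitive action on [n] = {1,…,n}. Then there exists a function f : Γ → Sym(n−1) such that defect_∞(f) ≤ 2/(n−1), but for every group homomorphism h : Γ → Sym(n−1) there exists γ ∈ Γ with d^H(f(γ), h(γ)) ≥ 1/2 − 1/(n−1). -/
open Finset

/-- Extend a permutation of `Fin n` to a partial function `ℕ → Option ℕ`
(`none` playing the role of the dummy symbol `⋆`). -/
def permExt {n : ℕ} (σ : Equiv.Perm (Fin n)) : ℕ → Option ℕ :=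
  fun x => if h : x < n then some ((σ ⟨x, h⟩ : Fin n) : ℕ) else none

/-- The (extended) normalized Hamming distance between permutations of possibly
different sizes.  For `n = N` it is `|{x : σ x ≠ τ x}| / n`; for `n ≤ N` it is
`(|{x ∈ [n] : σ x ≠ τ x}| + (N - n)) / N`. -/
noncomputable def dH {n N : ℕ} (σ : Equiv.Perm (Fin n)) (τ : Equiv.Perm (Fin N)) : ℝ :=
  (((Finset.range (max n N)).filter fun x => permExt σ x ≠ permExt τ x).card : ℝ)
    / ((max n N : ℕ) : ℝ)

/-- The uniform local defect of a map into a symmetric group. -/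
noncomputable def defectInfty {Γ : Type*} [Group Γ] {n : ℕ}
    (f : Γ → Equiv.Perm (Fin n)) : ℝ :=
  ⨆ p : Γ × Γ, dH (f (p.1 * p.2)) (f p.1 * f p.2)

/-- The uniform distance between two maps into (possibly different) symmetric groups. -/
noncomputable def dInfty {Γ : Type*} {n N : ℕ}
    (f : Γ → Equiv.Perm (Fin n)) (h : Γ → Equiv.Perm (Fin N)) : ℝ :=
  ⨆ γ : Γ, dH (f γ) (h γ)

/-- A finitely-additive probability measure on (the power set of) `Γ`. -/
def IsFinAddProb {Γ : Type*} (m : Set Γ → ℝ) : Prop :=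
  (∀ A : Set Γ, 0 ≤ m A ∧ m A ≤ 1) ∧ m Set.univ = 1 ∧
    ∀ A B : Set Γ, Disjoint A B → m (A ∪ B) = m A + m B

/-- Left invariance of a finitely-additive measure. -/
def LeftInvariant {Γ : Type*} [Group Γ] (m : Set Γ → ℝ) : Prop :=
  ∀ (γ : Γ) (A : Set Γ), m ((fun a => γ * a) '' A) = m A

/-- Right invariance of a finitely-additive measure. -/
def RightInvariant {Γ : Type*} [Group Γ] (m : Set Γ → ℝ) : Prop :=
  ∀ (γ : Γ) (A : Set Γ), m ((fun a => a * γ) '' A) = m A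

/-- Inverse invariance of a finitely-additive measure. -/
def InvInvariant {Γ : Type*} [Group Γ] (m : Set Γ → ℝ) : Prop :=
  ∀ A : Set Γ, m A⁻¹ = m A

/-- A discrete group is amenable if it admits a left-invariant finitely-additive
probability measure. -/
def IsAmenable (Γ : Type*) [Group Γ] : Prop :=
  ∃ m : Set Γ → ℝ, IsFinAddProb m ∧ LeftInvariant m

/-- A function between groups is symmetric if it sends `1 ↦ 1` and respects inverses. -/
def IsSymmetricMap {Γ G : Type*} [Group Γ] [Group G] (f : Γ → G) : Prop :=
  f 1 = 1 ∧ ∀ γ : Γ, f γ⁻¹ = (f γ)⁻¹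

/-- The weight `w(x →γ→ y)` : the measure of the set of supporters
`T(x →γ→ y) = { t : f(t)(f(t⁻¹γ)(x)) = y }`. -/
def weight {Γ : Type*} [Group Γ] {n : ℕ} (m : Set Γ → ℝ)
    (f : Γ → Equiv.Perm (Fin n)) (x : Fin n) (γ : Γ) (y : Fin n) : ℝ :=
  m { t : Γ | f t (f (t⁻¹ * γ) x) = y }

private lemma st0_permExt_lt {N : ℕ} (σ : Equiv.Perm (Fin N)) (x : ℕ) (h : x < N) :
    permExt σ x = some ((σ ⟨x, h⟩ : Fin N) : ℕ) := dif_pos h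

private lemma st0_dH_eq {N : ℕ} (σ τ : Equiv.Perm (Fin N)) :
    dH σ τ = (((univ : Finset (Fin N)).filter fun x => σ x ≠ τ x).card : ℝ) / N := by
  have hc : ((Finset.range (max N N)).filter fun x => permExt σ x ≠ permExt τ x)
      = Finset.image Fin.val ((univ : Finset (Fin N)).filter fun x => σ x ≠ τ x) := by
    ext a
    simp only [Nat.max_self, mem_filter, Finset.mem_range, Finset.mem_image, mem_univ, true_and]
    constructor
    · rintro ⟨ha, hne⟩
      refine ⟨⟨a, ha⟩, fun he => hne ?_, rfl⟩
      rw [st0_permExt_lt σ a ha, st0_permExt_lt τ a ha]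
      simp [he]
    · rintro ⟨x, hne, rfl⟩
      refine ⟨x.2, fun he => hne ?_⟩
      rw [st0_permExt_lt σ x x.2, st0_permExt_lt τ x x.2] at he
      simp only [Fin.eta, Option.some.injEq] at he
      exact Fin.val_injective he
  unfold dH
  rw [hc, Finset.card_image_of_injective _ Fin.val_injective, Nat.max_self]

private lemma st0_dH_nonneg {n N : ℕ} (σ : Equiv.Perm (Fin n)) (τ : Equiv.Perm (Fin N)) :
    0 ≤ dH σ τ := by
  unfold dH
  positivity

private def st0_proj {N : ℕ} (σ : Equiv.Perm (Fin (N + 1))) : Equiv.Perm (Fin N) :=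
  (Equiv.Perm.decomposeFin σ).2

private lemma st0_proj_succ {N : ℕ} (σ : Equiv.Perm (Fin (N + 1))) (x : Fin N) :
    (st0_proj σ x).succ = Equiv.swap 0 (σ 0) (σ x.succ) := by
  have hσ : Equiv.Perm.decomposeFin.symm
      ((Equiv.Perm.decomposeFin σ).1, (Equiv.Perm.decomposeFin σ).2) = σ := by
    rw [Prod.mk.eta]; exact Equiv.symm_apply_apply _ _
  have h0 : σ 0 = (Equiv.Perm.decomposeFin σ).1 := by
    conv_lhs => rw [← hσ]
    rw [Equiv.Perm.decomposeFin_symm_apply_zero]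
  have hs : σ x.succ = Equiv.swap 0 (σ 0) ((st0_proj σ x).succ) := by
    conv_lhs => rw [← hσ]
    rw [Equiv.Perm.decomposeFin_symm_apply_succ, ← h0]
    rfl
  rw [hs, Equiv.swap_apply_self]

private lemma st0_proj_eq {N : ℕ} (σ : Equiv.Perm (Fin (N + 1))) (x : Fin N)
    (h : σ x.succ ≠ 0) : (st0_proj σ x).succ = σ x.succ := by
  rw [st0_proj_succ]
  exact Equiv.swap_apply_of_ne_of_ne h (fun he => Fin.succ_ne_zero x (σ.injective he))

private lemma st0_defect {N : ℕ} (σ₁ σ₂ : Equiv.Perm (Fin (N + 1))) :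
    ((univ : Finset (Fin N)).filter
      fun x => st0_proj (σ₁ * σ₂) x ≠ (st0_proj σ₁ * st0_proj σ₂) x).card ≤ 2 := by
  classical
  have hsub : ((univ : Finset (Fin N)).filter
        fun x => st0_proj (σ₁ * σ₂) x ≠ (st0_proj σ₁ * st0_proj σ₂) x)
      ⊆ (univ.filter fun x : Fin N => σ₂ x.succ = 0) ∪
        (univ.filter fun x : Fin N => σ₁ (σ₂ x.succ) = 0) := by
    intro x hx
    simp only [mem_filter, mem_univ, true_and] at hx
    simp only [Finset.mem_union, mem_filter, mem_univ, true_and]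
    by_contra hcon
    push_neg at hcon
    obtain ⟨h2, h12⟩ := hcon
    apply hx
    apply Fin.succ_injective
    have e1 : (st0_proj (σ₁ * σ₂) x).succ = σ₁ (σ₂ x.succ) := by
      rw [st0_proj_eq (σ₁ * σ₂) x (by simpa using h12)]
      simp
    have e2 : (st0_proj σ₂ x).succ = σ₂ x.succ := st0_proj_eq σ₂ x h2
    have e3 : (st0_proj σ₁ (st0_proj σ₂ x)).succ = σ₁ (σ₂ x.succ) := by
      rw [st0_proj_eq σ₁ (st0_proj σ₂ x) (by rw [e2]; exact h12), e2]
    rw [e1, Equiv.Perm.mul_apply, e3]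
  refine le_trans (Finset.card_le_card hsub) (le_trans (Finset.card_union_le _ _) ?_)
  have b1 : (univ.filter fun x : Fin N => σ₂ x.succ = 0).card ≤ 1 := by
    apply Finset.card_le_one.mpr
    intro a ha b hb
    simp only [mem_filter] at ha hb
    exact Fin.succ_injective _ (σ₂.injective (ha.2.trans hb.2.symm))
  have b2 : (univ.filter fun x : Fin N => σ₁ (σ₂ x.succ) = 0).card ≤ 1 := by
    apply Finset.card_le_one.mpr
    intro a ha b hb
    simp only [mem_filter] at ha hb
    exact Fin.succ_injective _ (σ₂.injective (σ₁.injective (ha.2.trans hb.2.symm)))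
  omega

private def st0_act {N : ℕ} {Q : Type*} [Group Q] (u : Q →* Equiv.Perm (Fin (N + 1)))
    (v : Q →* Equiv.Perm (Fin N)) (q : Q) (p : Fin (N + 1) × Fin N) : Fin (N + 1) × Fin N :=
  (u q p.1, v q p.2)

private lemma st0_act_mul {N : ℕ} {Q : Type*} [Group Q] (u : Q →* Equiv.Perm (Fin (N + 1)))
    (v : Q →* Equiv.Perm (Fin N)) (q q' : Q) (p : Fin (N + 1) × Fin N) :
    st0_act u v (q * q') p = st0_act u v q (st0_act u v q' p) := by
  simp [st0_act, map_mul]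

private lemma st0_act_one {N : ℕ} {Q : Type*} [Group Q] (u : Q →* Equiv.Perm (Fin (N + 1)))
    (v : Q →* Equiv.Perm (Fin N)) (p : Fin (N + 1) × Fin N) :
    st0_act u v 1 p = p := by
  simp [st0_act]

private lemma st0_act_inv_act {N : ℕ} {Q : Type*} [Group Q] (u : Q →* Equiv.Perm (Fin (N + 1)))
    (v : Q →* Equiv.Perm (Fin N)) (q : Q) (p : Fin (N + 1) × Fin N) :
    st0_act u v q⁻¹ (st0_act u v q p) = p := by
  rw [← st0_act_mul, inv_mul_cancel, st0_act_one]

private lemma st0_act_act_inv {N : ℕ} {Q : Type*} [Group Q] (u : Q →* Equiv.Perm (Fin (N + 1)))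
    (v : Q →* Equiv.Perm (Fin N)) (q : Q) (p : Fin (N + 1) × Fin N) :
    st0_act u v q (st0_act u v q⁻¹ p) = p := by
  rw [← st0_act_mul, mul_inv_cancel, st0_act_one]

private lemma st0_act_injective {N : ℕ} {Q : Type*} [Group Q] (u : Q →* Equiv.Perm (Fin (N + 1)))
    (v : Q →* Equiv.Perm (Fin N)) (q : Q) :
    Function.Injective (st0_act u v q) := by
  intro a b hab
  have := congrArg (st0_act u v q⁻¹) hab
  rwa [st0_act_inv_act, st0_act_inv_act] at this

private lemma st0_main {N : ℕ} {Q : Type*} [Group Q] [Fintype Q]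
    (u : Q →* Equiv.Perm (Fin (N + 1))) (v : Q →* Equiv.Perm (Fin N))
    (htrans : ∀ y y' : Fin (N + 1), ∃ q : Q, u q y = y')
    (hmaj : ∀ q : Q, N < 2 * ((univ : Finset (Fin N)).filter
      (fun x => u q x.succ = (v q x).succ)).card) :
    False := by
  classical
  set Ω := (Fin (N + 1) × Fin N)
  set D : Finset Ω := (univ : Finset (Fin N)).image (fun x => (x.succ, x)) with hD
  have mem_D : ∀ p : Ω, p ∈ D ↔ p.1 = p.2.succ := by
    intro p
    simp only [hD, Finset.mem_image, mem_univ, true_and]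
    constructor
    · rintro ⟨x, rfl⟩; rfl
    · intro h; exact ⟨p.2, Prod.ext h.symm rfl⟩
  have card_D : D.card = N := by
    rw [hD, Finset.card_image_of_injective, card_univ, Fintype.card_fin]
    intro a b hab
    exact (Prod.ext_iff.mp hab).2
  set c : Ω → ℕ := fun p => (univ.filter fun q : Q => st0_act u v q p ∈ D).card with hc
  -- Claim 1 : total count
  have h1 : ∀ q : Q, (univ.filter fun p : Ω => st0_act u v q p ∈ D).card = N := by
    intro q
    refine Eq.trans ?_ card_D
    refine Finset.card_nbij (st0_act u v q) ?_ ?_ ?_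
    · intro p hp; simpa using (Finset.mem_filter.mp hp).2
    · exact fun a _ b _ hab => st0_act_injective u v q hab
    · intro b hb
      refine ⟨st0_act u v q⁻¹ b, ?_, st0_act_act_inv u v q b⟩
      simp only [Set.mem_setOf_eq, Finset.coe_filter, mem_univ, true_and]
      rw [st0_act_act_inv]
      exact hb
  have hsum1 : ∑ p : Ω, c p = Fintype.card Q * N := by
    simp only [hc, Finset.card_filter]
    rw [Finset.sum_comm]
    have h1' : ∀ q : Q, (∑ x : Ω, if st0_act u v q x ∈ D then 1 else 0) = N :=
      fun q => (Finset.card_filter _ _).symm.trans (h1 q)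
    rw [Finset.sum_congr rfl (fun q _ => h1' q), Finset.sum_const, card_univ, smul_eq_mul]
  -- Claim 2 : pairwise lower bound
  have hB : ∀ q q' : Q, N < 2 * (univ.filter fun p : Ω =>
      st0_act u v q p ∈ D ∧ st0_act u v q' p ∈ D).card := by
    intro q q'
    refine lt_of_lt_of_le (hmaj (q * q'⁻¹)) ?_
    have hle : ((univ : Finset (Fin N)).filter
        (fun x => u (q * q'⁻¹) x.succ = (v (q * q'⁻¹) x).succ)).card
        ≤ (univ.filter fun p : Ω => st0_act u v q p ∈ D ∧ st0_act u v q' p ∈ D).card := by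
      refine Finset.card_le_card_of_injOn (fun x => st0_act u v q'⁻¹ (x.succ, x)) ?_ ?_
      · intro x hx
        simp only [Finset.mem_coe, mem_filter, mem_univ, true_and] at hx ⊢
        constructor
        · rw [← st0_act_mul]
          rw [mem_D]
          exact hx
        · rw [st0_act_act_inv]
          rw [mem_D]
      · intro a _ b _ hab
        have := st0_act_injective u v q'⁻¹ hab
        exact (Prod.ext_iff.mp this).2
    omega
  -- Square sum identity
  have hsq : ∀ p : Ω, c p * c p = ∑ q : Q, ∑ q' : Q,
      if (st0_act u v q p ∈ D ∧ st0_act u v q' p ∈ D) then 1 else 0 := by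
    intro p
    rw [hc]
    simp only [Finset.card_filter]
    rw [Finset.sum_mul_sum]
    refine Finset.sum_congr rfl fun q _ => Finset.sum_congr rfl fun q' _ => ?_
    by_cases h1' : st0_act u v q p ∈ D <;> by_cases h2' : st0_act u v q' p ∈ D <;>
      simp [h1', h2']
  have h2 : Fintype.card Q * Fintype.card Q * (N + 1) ≤ 2 * ∑ p : Ω, c p * c p := by
    have e1 : ∑ p : Ω, c p * c p = ∑ q : Q, ∑ q' : Q, (univ.filter fun p : Ω =>
        st0_act u v q p ∈ D ∧ st0_act u v q' p ∈ D).card := by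
      rw [Finset.sum_congr rfl (fun p _ => hsq p), Finset.sum_comm]
      refine Finset.sum_congr rfl fun q _ => ?_
      rw [Finset.sum_comm]
      refine Finset.sum_congr rfl fun q' _ => ?_
      rw [← Finset.card_filter]
    rw [e1, Finset.mul_sum]
    have : ∀ q : Q, Fintype.card Q * (N + 1) ≤ 2 * ∑ q' : Q, (univ.filter fun p : Ω =>
        st0_act u v q p ∈ D ∧ st0_act u v q' p ∈ D).card := by
      intro q
      rw [Finset.mul_sum]
      calc Fintype.card Q * (N + 1) = ∑ _q' : Q, (N + 1) := by
            rw [Finset.sum_const, card_univ, smul_eq_mul]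
        _ ≤ _ := Finset.sum_le_sum fun q' _ => by have := hB q q'; omega
    calc Fintype.card Q * Fintype.card Q * (N + 1)
        = ∑ _q : Q, Fintype.card Q * (N + 1) := by
          rw [Finset.sum_const, card_univ, smul_eq_mul]; ring
      _ ≤ _ := Finset.sum_le_sum fun q _ => this q
  -- Step B : heavy point
  have hp₀ : ∃ p₀ : Ω, Fintype.card Q < 2 * c p₀ := by
    by_contra hcon
    push_neg at hcon
    have : 2 * ∑ p : Ω, c p * c p ≤ Fintype.card Q * Fintype.card Q * N := by
      calc 2 * ∑ p : Ω, c p * c p = ∑ p : Ω, (2 * c p) * c p := by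
            rw [Finset.mul_sum]; exact Finset.sum_congr rfl fun p _ => by ring
        _ ≤ ∑ p : Ω, Fintype.card Q * c p :=
            Finset.sum_le_sum fun p _ => Nat.mul_le_mul_right _ (hcon p)
        _ = Fintype.card Q * ∑ p : Ω, c p := by rw [Finset.mul_sum]
        _ = Fintype.card Q * (Fintype.card Q * N) := by rw [hsum1]
        _ = Fintype.card Q * Fintype.card Q * N := by ring
    have hQpos : 0 < Fintype.card Q := Fintype.card_pos
    nlinarith [h2]
  obtain ⟨p₀, hp₀⟩ := hp₀
  -- Step C : heavy orbit
  set O : Finset Ω := univ.image (fun q : Q => st0_act u v q p₀) with hO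
  have hmemO : ∀ p : Ω, p ∈ O ↔ ∃ q : Q, st0_act u v q p₀ = p := by
    intro p; simp [hO]
  have hOclosed : ∀ (q : Q) (p : Ω), p ∈ O → st0_act u v q p ∈ O := by
    intro q p hp
    obtain ⟨q', rfl⟩ := (hmemO p).mp hp
    exact (hmemO _).mpr ⟨q * q', st0_act_mul u v q q' p₀⟩
  have hp₀O : p₀ ∈ O := (hmemO p₀).mpr ⟨1, st0_act_one u v p₀⟩
  set s₀ : ℕ := (univ.filter fun q : Q => st0_act u v q p₀ = p₀).card with hs₀def
  have hs₀pos : 0 < s₀ := by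
    rw [hs₀def]
    refine Finset.card_pos.mpr ⟨1, ?_⟩
    simp [st0_act_one]
  have hfib : ∀ p ∈ O, (univ.filter fun q : Q => st0_act u v q p₀ = p).card = s₀ := by
    intro p hp
    obtain ⟨q₀, hq₀⟩ := (hmemO p).mp hp
    rw [hs₀def]
    refine Finset.card_nbij' (fun q => q₀⁻¹ * q) (fun q => q₀ * q) ?_ ?_ ?_ ?_
    · intro q hq
      simp only [Finset.mem_coe, mem_filter, mem_univ, true_and] at hq ⊢
      rw [st0_act_mul, hq, ← hq₀, st0_act_inv_act]
    · intro q hq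
      simp only [Finset.mem_coe, mem_filter, mem_univ, true_and] at hq ⊢
      rw [st0_act_mul, hq, hq₀]
    · intro a _; group
    · intro a _; group
  have hQcard : Fintype.card Q = O.card * s₀ := by
    rw [← card_univ]
    rw [Finset.card_eq_sum_card_fiberwise (f := fun q : Q => st0_act u v q p₀) (t := O)
      (fun q _ => (hmemO _).mpr ⟨q, rfl⟩)]
    rw [Finset.sum_congr rfl (fun p hp => hfib p hp), Finset.sum_const, smul_eq_mul]
  set dd : ℕ := (O.filter fun p => p ∈ D).card with hdd
  have hcp₀ : c p₀ = dd * s₀ := by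
    show (univ.filter fun q : Q => st0_act u v q p₀ ∈ D).card = dd * s₀
    rw [Finset.card_eq_sum_card_fiberwise (f := fun q : Q => st0_act u v q p₀)
      (t := O.filter fun p => p ∈ D) ?_]
    · rw [Finset.sum_congr rfl ?_, Finset.sum_const, smul_eq_mul]
      intro p hp
      simp only [mem_filter] at hp
      rw [← hfib p hp.1]
      congr 1
      ext q
      simp only [mem_filter, mem_univ, true_and]
      constructor
      · rintro ⟨_, h⟩; exact h
      · rintro h; exact ⟨by rw [h]; exact hp.2, h⟩
    · intro q hq
      simp only [Finset.mem_coe, mem_filter, mem_univ, true_and] at hq ⊢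
      exact ⟨(hmemO _).mpr ⟨q, rfl⟩, hq⟩
  have hOlt : O.card < 2 * dd := by
    have : O.card * s₀ < 2 * dd * s₀ := by
      rw [← hQcard]
      calc Fintype.card Q < 2 * c p₀ := hp₀
        _ = 2 * dd * s₀ := by rw [hcp₀]; ring
    exact Nat.lt_of_mul_lt_mul_right this
  have hddN : dd ≤ N := by
    refine le_trans (Finset.card_le_card (t := D) fun p hp => (Finset.mem_filter.mp hp).2)
      (le_of_eq card_D)
  -- Step D : first-coordinate fibers all have size m
  set m : Fin (N + 1) → ℕ := fun y => (O.filter fun p => p.1 = y).card with hm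
  have hmeq : ∀ y y' : Fin (N + 1), m y = m y' := by
    intro y y'
    obtain ⟨q, hq⟩ := htrans y y'
    rw [hm]
    refine Finset.card_nbij' (st0_act u v q) (st0_act u v q⁻¹) ?_ ?_ ?_ ?_
    · intro p hp
      simp only [Finset.mem_coe, mem_filter] at hp ⊢
      refine ⟨hOclosed q p hp.1, ?_⟩
      show u q p.1 = y'
      rw [hp.2, hq]
    · intro p hp
      simp only [Finset.mem_coe, mem_filter] at hp ⊢
      refine ⟨hOclosed q⁻¹ p hp.1, ?_⟩
      show u q⁻¹ p.1 = y
      rw [hp.2, ← hq, map_inv]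
      exact Equiv.symm_apply_apply _ _
    · intro a _; exact st0_act_inv_act u v q a
    · intro a _; exact st0_act_act_inv u v q a
  have hOcard : O.card = (N + 1) * m 0 := by
    rw [Finset.card_eq_sum_card_fiberwise (f := Prod.fst) (t := (univ : Finset (Fin (N + 1))))
      (fun p _ => mem_univ _)]
    rw [Finset.sum_congr rfl (fun y _ => hmeq y 0), Finset.sum_const, card_univ,
      Fintype.card_fin, smul_eq_mul]
  have hm0pos : 0 < m 0 := by
    obtain ⟨q, hq⟩ := htrans p₀.1 0
    rw [hm]
    refine Finset.card_pos.mpr ⟨st0_act u v q p₀, ?_⟩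
    simp only [mem_filter]
    exact ⟨hOclosed q p₀ hp₀O, hq⟩
  have hm0 : m 0 = 1 := by
    by_contra hne
    have h2le : 2 ≤ m 0 := by omega
    have : (N + 1) * 2 ≤ (N + 1) * m 0 := Nat.mul_le_mul_left _ h2le
    omega
  have hOcard1 : O.card = N + 1 := by rw [hOcard, hm0, mul_one]
  have huniq : ∀ p ∈ O, ∀ p' ∈ O, p.1 = p'.1 → p = p' := by
    intro p hp p' hp' h11
    have hcard1 : (O.filter fun r => r.1 = p.1).card ≤ 1 :=
      le_of_eq ((hmeq p.1 0).trans hm0)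
    exact Finset.card_le_one.mp hcard1 p (Finset.mem_filter.mpr ⟨hp, rfl⟩) p'
      (Finset.mem_filter.mpr ⟨hp', h11.symm⟩)
  -- F : diagonal points
  set F : Finset (Fin N) := univ.filter (fun x => ((x.succ, x) : Ω) ∈ O) with hF
  have hFcard : F.card = dd := by
    rw [hF, hdd]
    refine Finset.card_nbij (fun x => (x.succ, x)) ?_ ?_ ?_
    · intro x hx
      simp only [Finset.mem_coe, mem_filter, mem_univ, true_and] at hx ⊢
      exact ⟨hx, (mem_D _).mpr rfl⟩
    · intro a _ b _ hab
      exact (Prod.ext_iff.mp hab).2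
    · intro p hp
      simp only [Finset.coe_filter, Set.mem_setOf_eq] at hp
      obtain ⟨hpO, hpD⟩ := hp
      have h1' := (mem_D p).mp hpD
      refine ⟨p.2, ?_, ?_⟩
      · simp only [Set.mem_setOf_eq, Finset.coe_filter, mem_univ, true_and]
        rwa [show ((p.2.succ, p.2) : Ω) = p from Prod.ext h1'.symm rfl]
      · exact Prod.ext h1'.symm rfl
  -- Step F : second-coordinate fibers
  set I : Finset (Fin N) := O.image Prod.snd with hI
  have hkeq : ∀ z ∈ I, ∀ z' ∈ I,
      (O.filter fun p => p.2 = z).card = (O.filter fun p => p.2 = z').card := by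
    intro z hz z' hz'
    simp only [hI, Finset.mem_image] at hz hz'
    obtain ⟨p, hpO, hpz⟩ := hz
    obtain ⟨p', hp'O, hp'z⟩ := hz'
    obtain ⟨q, hq⟩ := htrans p.1 p'.1
    have hvq : v q z = z' := by
      have h1' : st0_act u v q p ∈ O := hOclosed q p hpO
      have h2' : (st0_act u v q p).1 = p'.1 := by show u q p.1 = p'.1; rw [hq]
      have := huniq _ h1' _ hp'O h2'
      have := (Prod.ext_iff.mp this).2
      rw [← hpz, ← hp'z]
      exact this
    refine Finset.card_nbij' (st0_act u v q) (st0_act u v q⁻¹) ?_ ?_ ?_ ?_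
    · intro r hr
      simp only [Finset.mem_coe, mem_filter] at hr ⊢
      refine ⟨hOclosed q r hr.1, ?_⟩
      show v q r.2 = z'
      rw [hr.2, hvq]
    · intro r hr
      simp only [Finset.mem_coe, mem_filter] at hr ⊢
      refine ⟨hOclosed q⁻¹ r hr.1, ?_⟩
      show v q⁻¹ r.2 = z
      rw [hr.2, ← hvq, map_inv]
      exact Equiv.symm_apply_apply _ _
    · intro a _; exact st0_act_inv_act u v q a
    · intro a _; exact st0_act_act_inv u v q a
  have hInonempty : I.Nonempty := ⟨p₀.2, Finset.mem_image.mpr ⟨p₀, hp₀O, rfl⟩⟩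
  obtain ⟨z₀, hz₀⟩ := hInonempty
  set k₀ : ℕ := (O.filter fun p => p.2 = z₀).card with hk₀
  have hOsum : O.card = I.card * k₀ := by
    rw [Finset.card_eq_sum_card_fiberwise (f := Prod.snd) (t := I)
      (fun p hp => Finset.mem_image.mpr ⟨p, hp, rfl⟩)]
    rw [Finset.sum_congr rfl (fun z hz => hkeq z hz z₀ hz₀), Finset.sum_const, smul_eq_mul]
  have hIN : I.card ≤ N := by
    calc I.card ≤ Fintype.card (Fin N) := Finset.card_le_univ I
      _ = N := Fintype.card_fin N
  have hk₀2 : 2 ≤ k₀ := by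
    by_contra hcon
    have : k₀ ≤ 1 := by omega
    have : O.card ≤ I.card := by
      rw [hOsum]
      calc I.card * k₀ ≤ I.card * 1 := Nat.mul_le_mul_left _ this
        _ = I.card := mul_one _
    omega
  have h2I : 2 * I.card ≤ N + 1 := by
    calc 2 * I.card ≤ k₀ * I.card := Nat.mul_le_mul_right _ hk₀2
      _ = I.card * k₀ := mul_comm _ _
      _ = O.card := hOsum.symm
      _ = N + 1 := hOcard1
  have hFI : F.card ≤ I.card := by
    refine Finset.card_le_card_of_injOn id ?_ (Function.Injective.injOn (fun a b h => h))
    intro x hx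
    rw [hF] at hx
    simp only [Finset.mem_coe, mem_filter, mem_univ, true_and] at hx
    exact Finset.mem_image.mpr ⟨(x.succ, x), hx, rfl⟩
  omega

/-- If `n ≥ 2` and `Γ` admits a transitive action on `[n]`, then there is
`f : Γ → Sym(n-1)` with `defect_∞(f) ≤ 2/(n-1)` which is `(1/2 - 1/(n-1))`-far from every
homomorphism `Γ → Sym(n-1)`. -/
theorem statement0 {Γ : Type*} [Group Γ] (n : ℕ) (hn : 2 ≤ n)
    (φ : Γ →* Equiv.Perm (Fin n)) (hφ : ∀ x y : Fin n, ∃ γ : Γ, φ γ x = y) :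
    ∃ f : Γ → Equiv.Perm (Fin (n - 1)),
      defectInfty f ≤ 2 / ((n : ℝ) - 1) ∧
      ∀ h : Γ →* Equiv.Perm (Fin (n - 1)),
        ∃ γ : Γ, dH (f γ) (h γ) ≥ 1 / 2 - 1 / ((n : ℝ) - 1) := by
  classical
  obtain ⟨M, rfl⟩ : ∃ M, n = M + 2 := ⟨n - 2, by omega⟩
  have hR : ((M + 2 : ℕ) : ℝ) - 1 = ((M + 1 : ℕ) : ℝ) := by push_cast; ring
  have hNpos : (0 : ℝ) < ((M + 1 : ℕ) : ℝ) := by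
    have : 0 < M + 1 := by omega
    exact_mod_cast this
  refine ⟨fun γ => st0_proj (φ γ), ?_, ?_⟩
  · -- defect bound
    apply ciSup_le
    intro p
    show dH (st0_proj (φ (p.1 * p.2))) (st0_proj (φ p.1) * st0_proj (φ p.2))
      ≤ 2 / (((M + 2 : ℕ) : ℝ) - 1)
    rw [map_mul, st0_dH_eq, hR]
    have h2 : ((((univ : Finset (Fin (M + 1))).filter fun x =>
        st0_proj (φ p.1 * φ p.2) x ≠ (st0_proj (φ p.1) * st0_proj (φ p.2)) x).card : ℕ) : ℝ)
        ≤ 2 := by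
      exact_mod_cast st0_defect (φ p.1) (φ p.2)
    exact div_le_div_of_nonneg_right h2 hNpos.le
  · intro h
    let h' : Γ →* Equiv.Perm (Fin (M + 1)) := h
    rcases le_or_gt ((1 : ℝ) / 2 - 1 / (((M + 2 : ℕ) : ℝ) - 1)) 0 with hc0 | hc0
    · exact ⟨1, le_trans hc0 (st0_dH_nonneg _ _)⟩
    by_contra hcon
    push_neg at hcon
    rw [hR] at hcon hc0
    -- per-γ numeric disagreement bound
    have hdis : ∀ γ : Γ, 2 * ((univ : Finset (Fin (M + 1))).filter
        (fun x => ¬ (st0_proj (φ γ) x = h' γ x))).card + 2 < M + 1 := by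
      intro γ
      have hγ : ((((univ : Finset (Fin (M + 1))).filter
          (fun x => st0_proj (φ γ) x ≠ h' γ x)).card : ℕ) : ℝ) / ((M + 1 : ℕ) : ℝ)
          < 1 / 2 - 1 / ((M + 1 : ℕ) : ℝ) := by
        rw [← st0_dH_eq]
        exact hcon γ
      rw [div_lt_iff₀ hNpos] at hγ
      have hmul : (1 / 2 - 1 / ((M + 1 : ℕ) : ℝ)) * ((M + 1 : ℕ) : ℝ)
          = ((M + 1 : ℕ) : ℝ) / 2 - 1 := by
        field_simp
      rw [hmul] at hγ
      have hfin : ((2 * ((univ : Finset (Fin (M + 1))).filter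
          (fun x => st0_proj (φ γ) x ≠ h' γ x)).card + 2 : ℕ) : ℝ) < ((M + 1 : ℕ) : ℝ) := by
        push_cast at hγ ⊢
        linarith
      have hfin2 : 2 * ((univ : Finset (Fin (M + 1))).filter
          (fun x => st0_proj (φ γ) x ≠ h' γ x)).card + 2 < M + 1 := by
        exact_mod_cast hfin
      simpa only [ne_eq] using hfin2
    -- majority agreement with φ
    have hA : ∀ γ : Γ, M + 1 < 2 * ((univ : Finset (Fin (M + 1))).filter
        (fun x => φ γ x.succ = (h' γ x).succ)).card := by
      intro γ
      have hsplit := Finset.card_filter_add_card_filter_not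
        (s := (univ : Finset (Fin (M + 1)))) (p := fun x => st0_proj (φ γ) x = h' γ x)
      rw [Finset.card_univ, Fintype.card_fin] at hsplit
      have hsplit2 := Finset.card_filter_add_card_filter_not
        (s := (univ : Finset (Fin (M + 1))).filter (fun x => st0_proj (φ γ) x = h' γ x))
        (p := fun x => φ γ x.succ = 0)
      have hone : (((univ : Finset (Fin (M + 1))).filter
          (fun x => st0_proj (φ γ) x = h' γ x)).filter (fun x => φ γ x.succ = 0)).card ≤ 1 := by
        apply Finset.card_le_one.mpr
        intro a ha b hb
        rw [mem_filter] at ha hb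
        exact Fin.succ_injective _ ((φ γ).injective (ha.2.trans hb.2.symm))
      have hsub : ((univ : Finset (Fin (M + 1))).filter
            (fun x => st0_proj (φ γ) x = h' γ x)).filter (fun x => ¬ (φ γ x.succ = 0)) ⊆
          (univ : Finset (Fin (M + 1))).filter (fun x => φ γ x.succ = (h' γ x).succ) := by
        intro x hx
        rw [mem_filter] at hx
        obtain ⟨hxA, hnz⟩ := hx
        rw [mem_filter] at hxA
        rw [mem_filter]
        refine ⟨mem_univ _, ?_⟩
        rw [← st0_proj_eq (φ γ) x hnz, hxA.2]
      have hd := hdis γ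
      refine lt_of_lt_of_le ?_ (Nat.mul_le_mul_left 2 (Finset.card_le_card hsub))
      omega
    -- build the finite group and conclude
    let ψ : Γ →* Equiv.Perm (Fin (M + 2)) × Equiv.Perm (Fin (M + 1)) := φ.prod h'
    haveI : Fintype ↥ψ.range := Fintype.ofFinite _
    apply st0_main (N := M + 1) (Q := ↥ψ.range)
      ((MonoidHom.fst _ _).comp ψ.range.subtype) ((MonoidHom.snd _ _).comp ψ.range.subtype)
    · intro y y'
      obtain ⟨γ, hγ⟩ := hφ y y'
      exact ⟨⟨ψ γ, ⟨γ, rfl⟩⟩, hγ⟩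
    · rintro ⟨qq, hqq⟩
      obtain ⟨γ, rfl⟩ := MonoidHom.mem_range.mp hqq
      exact hA γ
end

section
/- Let Γ be a group that admits a surjective homomorphism onto the free group F₂ of rank 2. Then for every integer k ≥ 1 there exist n_k ∈ ℕ with n_k = k² and a function f_k : Γ → Sym(n_k) such that defect_∞(f_k) ≤ 2/k, but for every N ≥ n_k and every group homomorphism h : Γ → Sym(N), d_∞(h, f_k) ≥ 1 − 5/k. -/
open Finset

namespace Stmt3Aux

open FreeGroup List

abbrev L2 := List ((Fin 2) × Bool)

def aL (k : ℕ) (l : (Fin 2) × Bool) : ZMod k := if l.1 = 0 then (if l.2 then 1 else -1) else 0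

def AW (k : ℕ) : L2 → ZMod k
  | [] => 0
  | l :: L => aL k l + AW k L

def pv (k : ℕ) (a b : (Fin 2) × Bool) : ZMod k :=
  if a.1 = 1 ∧ b = a then (if a.2 then (1 : ZMod k) else -1) else 0

def lamp (k : ℕ) : ZMod k → L2 → ZMod k → ZMod k
  | _, [], _ => 0
  | _, [_], _ => 0
  | p, a :: b :: L, x => pv k a b * (if x = p then 1 else 0) + lamp k (p + aL k a) (b :: L) x

def bt (k : ℕ) (p : ZMod k) (L₁ L₂ : L2) (x : ZMod k) : ZMod k :=
  match L₁.getLast?, L₂.head? with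
  | some a, some b => pv k a b * (if x = p + AW k L₁ then 1 else 0)
  | _, _ => 0

variable {k : ℕ}

@[simp] lemma AW_nil : AW k [] = 0 := rfl
@[simp] lemma AW_cons (a : (Fin 2) × Bool) (L : L2) : AW k (a :: L) = aL k a + AW k L := rfl

lemma AW_append (L₁ L₂ : L2) : AW k (L₁ ++ L₂) = AW k L₁ + AW k L₂ := by
  induction L₁ with
  | nil => simp
  | cons a L ih => simp [ih]; ring

@[simp] lemma aL_inv (a : (Fin 2) × Bool) : aL k (a.1, !a.2) = - aL k a := by
  rcases a with ⟨g, b⟩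
  cases b <;> simp [aL] <;> split <;> simp

lemma AW_invRev (L : L2) : AW k (invRev L) = - AW k L := by
  induction L with
  | nil => simp [invRev]
  | cons a L ih =>
      have : invRev (a :: L) = invRev L ++ [(a.1, !a.2)] := by simp [invRev]
      rw [this, AW_append, ih]
      simp only [AW_cons, AW_nil, aL_inv]
      ring

lemma pv_ne_zero {a b : (Fin 2) × Bool} (h : pv k a b ≠ 0) : a.1 = 1 ∧ b = a := by
  by_contra hc
  exact h (by simp [pv, hc])

lemma aL_eq_zero_of_pv {a b : (Fin 2) × Bool} (h : pv k a b ≠ 0) : aL k a = 0 := by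
  obtain ⟨h1, _⟩ := pv_ne_zero h
  simp [aL, h1]

lemma pv_inv (a b : (Fin 2) × Bool) : pv k (b.1, !b.2) (a.1, !a.2) = - pv k a b := by
  rcases a with ⟨g, s⟩; rcases b with ⟨g', s'⟩
  fin_cases g <;> fin_cases g' <;> cases s <;> cases s' <;>
    simp [pv, Prod.ext_iff] <;> norm_num

-- lamp equation lemmas
@[simp] lemma lamp_nil (p x : ZMod k) : lamp k p [] x = 0 := rfl
@[simp] lemma lamp_single (p x : ZMod k) (a : (Fin 2) × Bool) : lamp k p [a] x = 0 := rfl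
lemma lamp_cons (p x : ZMod k) (a b : (Fin 2) × Bool) (L : L2) :
    lamp k p (a :: b :: L) x = pv k a b * (if x = p then 1 else 0) + lamp k (p + aL k a) (b :: L) x := rfl

lemma lamp_shift (L : L2) : ∀ p q x : ZMod k, lamp k p L x = lamp k q L (x - p + q) := by
  induction L with
  | nil => simp
  | cons a L ih =>
      cases L with
      | nil => simp
      | cons b M =>
          intro p q x
          rw [lamp_cons, lamp_cons, ih (p + aL k a) (q + aL k a) x]
          have h3 : x - (p + aL k a) + (q + aL k a) = x - p + q := by ring
          rw [h3]
          congr 1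
          have h1 : (x = p) ↔ (x - p + q = q) :=
            ⟨fun h => by rw [h]; ring, fun h => by linear_combination h⟩
          rw [if_congr h1 rfl rfl]

lemma bt_nil_left (p x : ZMod k) (L₂ : L2) : bt k p [] L₂ x = 0 := by
  simp [bt]

lemma bt_nil_right (p x : ZMod k) (L₁ : L2) : bt k p L₁ [] x = 0 := by
  unfold bt
  cases h : L₁.getLast? <;> simp

lemma bt_cons_cons (p x : ZMod k) (a a' : (Fin 2) × Bool) (L₁ L₂ : L2) :
    bt k p (a :: a' :: L₁) L₂ x = bt k (p + aL k a) (a' :: L₁) L₂ x := by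
  unfold bt
  rw [List.getLast?_cons_cons]
  cases h : (a' :: L₁).getLast? <;> cases h2 : L₂.head? <;> simp [AW_cons]
  ring_nf

lemma bt_single (p x : ZMod k) (a : (Fin 2) × Bool) (L₂ : L2) :
    bt k p [a] L₂ x = (match L₂.head? with
      | some b => pv k a b * (if x = p then 1 else 0)
      | none => 0) := by
  unfold bt
  cases h2 : L₂.head? with
  | none => simp
  | some b =>
      simp only [List.getLast?_singleton]
      by_cases hp : pv k a b = 0
      · simp [hp]
      · have := aL_eq_zero_of_pv hp
        simp [AW_cons, AW_nil, this]

lemma lamp_append (L₂ : L2) : ∀ (L₁ : L2) (p x : ZMod k),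
    lamp k p (L₁ ++ L₂) x = lamp k p L₁ x + lamp k (p + AW k L₁) L₂ x + bt k p L₁ L₂ x := by
  intro L₁
  induction L₁ with
  | nil => intro p x; simp [bt_nil_left]
  | cons a L ih =>
      intro p x
      cases L with
      | nil =>
          cases L₂ with
          | nil => simp [bt_nil_right]
          | cons b M =>
              simp only [List.singleton_append, List.cons_append, List.nil_append]
              rw [lamp_cons, bt_single]
              simp only [List.head?_cons, lamp_single]
              rw [AW_cons, AW_nil]
              ring
      | cons a' L' =>
          have h1 : lamp k p ((a :: a' :: L') ++ L₂) x
              = pv k a a' * (if x = p then 1 else 0) + lamp k (p + aL k a) ((a' :: L') ++ L₂) x := rfl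
          rw [h1, ih (p + aL k a) x, lamp_cons, bt_cons_cons]
          have h2 : p + AW k (a :: a' :: L') = p + aL k a + AW k (a' :: L') := by
            rw [AW_cons]; ring
          rw [h2]
          ring

lemma lamp_invRev (L : L2) : ∀ p x : ZMod k,
    lamp k p (invRev L) x = - lamp k 0 L (x - p + AW k L) := by
  induction L with
  | nil => intro p x; simp [invRev]
  | cons a L ih =>
      intro p x
      have hir : invRev (a :: L) = invRev L ++ [(a.1, !a.2)] := by simp [invRev]
      rw [hir, lamp_append, ih p x, lamp_single, bt]
      cases L with
      | nil => simp [invRev]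
      | cons b M =>
          have hgl : (invRev (b :: M)).getLast? = some (b.1, !b.2) := by
            simp [invRev]
          rw [hgl]
          simp only [List.head?_cons]
          -- LHS: -lamp k 0 (b::M) (x - p + AW (b::M)) + 0 + pv (b.1,!b.2) (a.1,!a.2) * ite (x = p + AW (invRev (b::M)))
          rw [lamp_cons (k := k) 0 (x - p + AW k (a :: b :: M)) a b M]
          rw [pv_inv, AW_invRev]
          rw [lamp_shift (b :: M) (0 + aL k a) 0 (x - p + AW k (a :: b :: M))]
          have e1 : x - p + AW k (a :: b :: M) - (0 + aL k a) + 0 = x - p + AW k (b :: M) := by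
            rw [AW_cons]; ring
          rw [e1]
          have e2 : pv k a b * (if x - p + AW k (a :: b :: M) = 0 then 1 else 0)
              = pv k a b * (if x = p + -AW k (b :: M) then 1 else 0) := by
            by_cases hp : pv k a b = 0
            · simp [hp]
            · have haa : aL k a = 0 := aL_eq_zero_of_pv hp
              congr 1
              have hiff : (x - p + AW k (a :: b :: M) = 0) ↔ (x = p + -AW k (b :: M)) := by
                rw [AW_cons, haa]
                constructor <;> intro h <;> linear_combination h
              rw [if_congr hiff rfl rfl]
          rw [e2]
          ring

-- ## Reduced words and the cancellation decomposition

def Cancels (a b : (Fin 2) × Bool) : Prop := a.1 = b.1 ∧ a.2 = !b.2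

instance : DecidableRel Cancels := fun a b => by unfold Cancels; infer_instance

def IsRed (L : L2) : Prop := List.Chain' (fun a b => ¬ Cancels a b) L

lemma isRed_reduce (L : L2) : IsRed (reduce L) := by
  induction L with
  | nil => simp [IsRed, List.Chain']
  | cons x L ih =>
      rw [reduce.cons]
      cases h : reduce L with
      | nil => simp [IsRed, List.Chain']
      | cons hd tl =>
          rw [h] at ih
          by_cases hc : x.1 = hd.1 ∧ x.2 = !hd.2
          · simp only [hc, and_self, if_true]
            exact ih.tail
          · simp only [hc, if_false]
            exact List.isChain_cons_cons.2 ⟨fun hcc => hc ⟨hcc.1, hcc.2⟩, ih⟩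

lemma reduce_eq_self_of_isRed : ∀ {L : L2}, IsRed L → reduce L = L := by
  intro L
  induction L with
  | nil => intro; rfl
  | cons x L ih =>
      intro h
      rw [reduce.cons, ih h.tail]
      cases L with
      | nil => rfl
      | cons hd tl =>
          have hnc : ¬ Cancels x hd := (List.isChain_cons_cons.1 h).1
          have : ¬ (x.1 = hd.1 ∧ x.2 = !hd.2) := fun hcc => hnc ⟨hcc.1, hcc.2⟩
          simp only [this, if_false]

lemma isRed_toWord (x : FreeGroup (Fin 2)) : IsRed (toWord x) := by
  rw [← reduce_toWord]
  exact isRed_reduce _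

lemma toWord_mul' (x y : FreeGroup (Fin 2)) : (x*y).toWord = reduce (x.toWord ++ y.toWord) := by
  rw [← mk_toWord (x := x), ← mk_toWord (x := y), mul_mk, toWord_mk, mk_toWord, mk_toWord]

/-- The boundary of `P` and `Q` does not cancel. -/
def GoodBd (P Q : L2) : Prop := ∀ a ∈ P.getLast?, ∀ b ∈ Q.head?, ¬ Cancels a b

lemma decomp : ∀ (L₁ : L2), ∀ (L₂ : L2), IsRed L₁ → IsRed L₂ →
    ∃ P S Q : L2, L₁ = P ++ S ∧ L₂ = invRev S ++ Q ∧ reduce (L₁ ++ L₂) = P ++ Q ∧ GoodBd P Q := by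
  intro L₁
  induction L₁ using List.reverseRecOn with
  | nil =>
      intro L₂ _ h₂
      exact ⟨[], [], L₂, by simp, by simp [invRev], by simpa using reduce_eq_self_of_isRed h₂,
        by simp [GoodBd]⟩
  | append_singleton M a ih =>
      intro L₂ h₁ h₂
      cases L₂ with
      | nil =>
          refine ⟨M ++ [a], [], [], by simp, by simp [invRev], ?_, by simp [GoodBd]⟩
          simpa using reduce_eq_self_of_isRed h₁
      | cons b L₂' =>
          by_cases hc : Cancels a b
          · -- cancellation step
            have hb : b = (a.1, !a.2) := by
              obtain ⟨h1, h2⟩ := hc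
              have : b.2 = !a.2 := by rw [h2, Bool.not_not]
              exact Prod.ext h1.symm this
            have hstep : reduce ((M ++ [a]) ++ (b :: L₂')) = reduce (M ++ L₂') := by
              have : (M ++ [a]) ++ (b :: L₂') = M ++ (a.1, a.2) :: (a.1, !a.2) :: L₂' := by
                rw [hb]; simp
              rw [this]
              exact reduce.Step.eq FreeGroup.Red.Step.not
            have hM : IsRed M := (List.isChain_append.1 h₁).1
            have hL₂' : IsRed L₂' := h₂.tail
            obtain ⟨P, S', Q, e1, e2, e3, e4⟩ := ih L₂' hM hL₂'
            refine ⟨P, S' ++ [a], Q, ?_, ?_, ?_, e4⟩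
            · rw [e1, List.append_assoc]
            · have : invRev (S' ++ [a]) = (a.1, !a.2) :: invRev S' := by simp [invRev]
              rw [this, ← hb, e2]
              rfl
            · rw [hstep, e3]
          · -- no cancellation: concatenation is already reduced
            refine ⟨M ++ [a], [], b :: L₂', by simp, by simp [invRev], ?_, ?_⟩
            · apply reduce_eq_self_of_isRed
              refine List.isChain_append.2 ⟨h₁, h₂, ?_⟩
              intro p hp q hq
              simp only [List.getLast?_concat, Option.mem_def, Option.some_inj] at hp
              simp only [List.head?_cons, Option.mem_def, Option.some_inj] at hq
              subst hp; subst hq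
              exact hc
            · intro p hp q hq
              simp only [List.getLast?_concat, Option.mem_def, Option.some_inj] at hp
              simp only [List.head?_cons, Option.mem_def, Option.some_inj] at hq
              subst hp; subst hq
              exact hc

lemma bt_eq_zero_of_ne {p x : ZMod k} {L₁ L₂ : L2} (h : x ≠ p + AW k L₁) : bt k p L₁ L₂ x = 0 := by
  unfold bt
  cases L₁.getLast? <;> cases L₂.head? <;> simp [h]

lemma AW_mul (x y : FreeGroup (Fin 2)) :
    AW k ((x * y).toWord) = AW k x.toWord + AW k y.toWord := by
  obtain ⟨P, S, Q, e1, e2, e3, _⟩ := decomp x.toWord y.toWord (isRed_toWord x) (isRed_toWord y)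
  rw [toWord_mul', e3, e1, e2, AW_append, AW_append, AW_append, AW_invRev]
  ring

lemma lamp_mul (x y : FreeGroup (Fin 2)) :
    ∃ c : ZMod k, ∀ z : ZMod k, z ≠ c →
      lamp k 0 ((x * y).toWord) z
        = lamp k 0 x.toWord z + lamp k 0 y.toWord (z - AW k x.toWord) := by
  obtain ⟨P, S, Q, e1, e2, e3, _⟩ := decomp x.toWord y.toWord (isRed_toWord x) (isRed_toWord y)
  refine ⟨AW k P, fun z hz => ?_⟩
  have hz0 : z ≠ 0 + AW k P := by simpa using hz
  -- LHS
  rw [toWord_mul', e3, lamp_append, bt_eq_zero_of_ne hz0]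
  -- RHS first term
  rw [e1, lamp_append, bt_eq_zero_of_ne hz0]
  -- RHS second term
  rw [e2, lamp_append]
  have hz2 : z - AW k (P ++ S) ≠ 0 + AW k (invRev S) := by
    rw [AW_invRev, AW_append]
    intro hcon
    apply hz
    linear_combination hcon
  rw [bt_eq_zero_of_ne hz2]
  rw [lamp_invRev]
  -- normalize all lamp bases to 0
  rw [lamp_shift S (0 + AW k P) 0 z, lamp_shift Q (0 + AW k P) 0 z,
    lamp_shift Q (0 + AW k (invRev S)) 0 (z - AW k (P ++ S))]
  rw [AW_append, AW_invRev]
  have r1 : z - (0 + AW k P) + 0 = z - AW k P := by ring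
  have r2 : z - (AW k P + AW k S) - 0 + AW k S = z - AW k P := by ring
  have r3 : z - (AW k P + AW k S) - (0 + -AW k S) + 0 = z - AW k P := by ring
  rw [r1, r2, r3]
  ring

-- ## The almost-homomorphism into Perm (ZMod k × ZMod k)

def gw (k : ℕ) (w : FreeGroup (Fin 2)) : Equiv.Perm (ZMod k × ZMod k) where
  toFun z := (z.1 + AW k w.toWord, z.2 + lamp k 0 w.toWord (z.1 + AW k w.toWord))
  invFun z := (z.1 - AW k w.toWord, z.2 - lamp k 0 w.toWord z.1)
  left_inv z := by simp
  right_inv z := by simp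

lemma gw_apply (w : FreeGroup (Fin 2)) (z : ZMod k × ZMod k) :
    gw k w z = (z.1 + AW k w.toWord, z.2 + lamp k 0 w.toWord (z.1 + AW k w.toWord)) := rfl

/-- points where `gw (x*y)` and `gw x * gw y` differ lie in a single column -/
lemma gw_defect (x y : FreeGroup (Fin 2)) :
    ∃ c₀ : ZMod k, ∀ z : ZMod k × ZMod k, gw k (x*y) z ≠ (gw k x * gw k y) z → z.1 = c₀ := by
  obtain ⟨c, hc⟩ := lamp_mul (k := k) x y
  refine ⟨c - AW k ((x*y).toWord), fun z hne => ?_⟩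
  by_contra hz1
  apply hne
  have hA := AW_mul (k := k) x y
  have h1 : (gw k x * gw k y) z
      = (z.1 + AW k y.toWord + AW k x.toWord,
          z.2 + lamp k 0 y.toWord (z.1 + AW k y.toWord)
            + lamp k 0 x.toWord (z.1 + AW k y.toWord + AW k x.toWord)) := by
    rfl
  rw [h1, gw_apply]
  have hX : z.1 + AW k ((x*y).toWord) ≠ c := fun hcon => hz1 (by rw [← hcon]; ring)
  have := hc (z.1 + AW k ((x*y).toWord)) hX
  apply Prod.ext
  · simp only [hA]; ring
  · simp only []
    rw [this, hA]
    have e1 : z.1 + (AW k x.toWord + AW k y.toWord) - AW k x.toWord = z.1 + AW k y.toWord := by ring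
    have e2 : z.1 + (AW k x.toWord + AW k y.toWord) = z.1 + AW k y.toWord + AW k x.toWord := by ring
    rw [e1, e2]
    ring

-- ## The explicit "kernel witness" word

def vP : (Fin 2) × Bool := (1, true)
def uP : (Fin 2) × Bool := (0, true)
def uM : (Fin 2) × Bool := (0, false)

def Rv (c : ℕ) : L2 := List.replicate c vP

/-- `W' c j = v^c (u v^c)^j` as a word -/
def W' (c : ℕ) : ℕ → L2
  | 0 => Rv c
  | j + 1 => W' c j ++ (uP :: Rv c)

def Ue (j : ℕ) : L2 := List.replicate j uM

@[simp] lemma aL_vP : aL k vP = 0 := by simp [aL, vP]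
@[simp] lemma aL_uP : aL k uP = 1 := by simp [aL, uP]
@[simp] lemma aL_uM : aL k uM = -1 := by simp [aL, uM]
@[simp] lemma pv_vP_vP : pv k vP vP = 1 := by simp [pv, vP]
@[simp] lemma pv_uP_vP : pv k uP vP = 0 := by simp [pv, uP, vP]
@[simp] lemma pv_vP_uP : pv k vP uP = 0 := by simp [pv, vP, uP]
@[simp] lemma pv_vP_uM : pv k vP uM = 0 := by simp [pv, vP, uM]
@[simp] lemma pv_uM_uM : pv k uM uM = 0 := by simp [pv, uM]
@[simp] lemma pv_uP_uP : pv k uP uP = 0 := by simp [pv, uP]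

lemma AW_replicate (n : ℕ) (a : (Fin 2) × Bool) : AW k (List.replicate n a) = (n : ZMod k) * aL k a := by
  induction n with
  | zero => simp
  | succ n ih => rw [List.replicate_succ, AW_cons, ih]; push_cast; ring

@[simp] lemma AW_Rv (c : ℕ) : AW k (Rv c) = 0 := by simp [Rv, AW_replicate]

lemma AW_W' (c : ℕ) : ∀ j, AW k (W' c j) = (j : ZMod k)
  | 0 => by simp [W']
  | j + 1 => by
      rw [W', AW_append, AW_W' c j, AW_cons, AW_Rv, aL_uP]
      push_cast; ring

@[simp] lemma AW_Ue (j : ℕ) : AW k (Ue j) = -(j : ZMod k) := by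
  simp [Ue, AW_replicate]

lemma lamp_Rv (c : ℕ) : ∀ (p x : ZMod k),
    lamp k p (Rv (c + 1)) x = (c : ZMod k) * (if x = p then 1 else 0) := by
  induction c with
  | zero => intro p x; simp [Rv]
  | succ c ih =>
      intro p x
      have : Rv (c + 2) = vP :: vP :: List.replicate c vP := by
        simp [Rv, List.replicate_succ]
      rw [this, lamp_cons]
      have h2 : (vP :: List.replicate c vP : L2) = Rv (c+1) := by simp [Rv, List.replicate_succ]
      rw [h2, ih (p + aL k vP) x]
      rw [aL_vP, add_zero, pv_vP_vP]
      push_cast; ring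

lemma lamp_rep_uM (n : ℕ) : ∀ (p x : ZMod k), lamp k p (Ue n) x = 0 := by
  induction n with
  | zero => intro p x; simp [Ue]
  | succ n ih =>
      intro p x
      cases n with
      | zero => simp [Ue]
      | succ m =>
          have : Ue (m + 2) = uM :: uM :: List.replicate m uM := by
            simp [Ue, List.replicate_succ]
          rw [this, lamp_cons]
          have h2 : (uM :: List.replicate m uM : L2) = Ue (m+1) := by simp [Ue, List.replicate_succ]
          rw [h2, ih (p + aL k uM) x, pv_uM_uM]
          ring

lemma getLast?_Rv (c : ℕ) : (Rv (c + 1)).getLast? = some vP := by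
  rw [Rv, List.replicate_succ', List.getLast?_concat]

lemma getLast?_W' (c j : ℕ) : (W' (c + 1) j).getLast? = some vP := by
  cases j with
  | zero => exact getLast?_Rv c
  | succ j =>
      rw [W']
      rw [List.getLast?_append_of_ne_nil _ (by simp)]
      have : (uP :: Rv (c + 1)) = [uP] ++ Rv (c+1) := rfl
      rw [this, List.getLast?_append_of_ne_nil _ (by simp [Rv]), getLast?_Rv]

lemma isRed_Rv (c : ℕ) : IsRed (Rv c) :=
  List.isChain_replicate_of_rel c (by decide)

lemma isRed_W' (c : ℕ) : ∀ j, IsRed (W' (c + 1) j)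
  | 0 => isRed_Rv (c + 1)
  | j + 1 => by
      rw [W']
      refine List.isChain_append.2 ⟨isRed_W' c j, ?_, ?_⟩
      · refine List.isChain_cons.2 ⟨?_, isRed_Rv (c+1)⟩
        intro y hy
        have : y = vP := by
          rw [Rv, List.replicate_succ] at hy
          simp at hy
          exact hy.symm
        rw [this]; decide
      · intro a ha b hb
        rw [getLast?_W' c j] at ha
        simp at ha hb
        rw [← ha, ← hb]
        decide

lemma isRed_W'Ue (c j n : ℕ) : IsRed (W' (c + 1) j ++ Ue n) := by
  refine List.isChain_append.2 ⟨isRed_W' c j, List.isChain_replicate_of_rel n (by decide), ?_⟩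
  intro a ha b hb
  rw [getLast?_W' c j] at ha
  cases n with
  | zero => simp [Ue] at hb
  | succ n =>
      have : (Ue (n+1)).head? = some uM := by simp [Ue, List.replicate_succ]
      rw [this] at hb
      simp at ha hb
      rw [← ha, ← hb]
      decide

lemma head?_Rv (c : ℕ) : (Rv (c+1)).head? = some vP := by
  simp [Rv, List.replicate_succ]

lemma lamp_cons_Rv (c : ℕ) (p x : ZMod k) :
    lamp k p (uP :: Rv (c + 1)) x = (c : ZMod k) * (if x = p + 1 then 1 else 0) := by
  have : (uP :: Rv (c+1) : L2) = uP :: vP :: List.replicate c vP := by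
    simp [Rv, List.replicate_succ]
  rw [this, lamp_cons]
  have h2 : (vP :: List.replicate c vP : L2) = Rv (c+1) := by simp [Rv, List.replicate_succ]
  rw [h2, lamp_Rv c (p + aL k uP) x]
  simp

/-- the number of `i < j+1` congruent to `x` mod `k` -/
def cnt (k : ℕ) (j : ℕ) (x : ZMod k) : ℕ := ((Finset.range (j+1)).filter fun i => ((i:ℕ) : ZMod k) = x).card

lemma cnt_succ (j : ℕ) (x : ZMod k) :
    cnt k (j+1) x = cnt k j x + if ((j+1 : ℕ) : ZMod k) = x then 1 else 0 := by
  unfold cnt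
  rw [Finset.range_add_one, Finset.filter_insert]
  split
  · rw [Finset.card_insert_of_notMem (by simp)]
  · simp

lemma lamp_W' (c : ℕ) : ∀ (j : ℕ) (x : ZMod k),
    lamp k 0 (W' (c+1) j) x = (c : ZMod k) * (cnt k j x : ZMod k) := by
  intro j
  induction j with
  | zero =>
      intro x
      rw [W', lamp_Rv c 0 x]
      have : cnt k 0 x = if ((0:ℕ) : ZMod k) = x then 1 else 0 := by
        unfold cnt
        rw [Finset.range_one, Finset.filter_singleton]
        split <;> simp
      rw [this]
      push_cast
      rcases eq_or_ne x 0 with h | h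
      · rw [if_pos h, if_pos (by rw [h])]
      · rw [if_neg h, if_neg (fun hc => h hc.symm)]
  | succ j ih =>
      intro x
      rw [W', lamp_append, ih x, lamp_cons_Rv c (0 + AW k (W' (c+1) j)) x]
      have hbt : bt k 0 (W' (c+1) j) (uP :: Rv (c+1)) x = 0 := by
        unfold bt
        rw [getLast?_W' c j]
        simp
      rw [hbt, AW_W', cnt_succ]
      push_cast
      have : (0 : ZMod k) + (j:ZMod k) + 1 = ((j:ZMod k) + 1) := by ring
      rw [this]
      rcases eq_or_ne x ((j:ZMod k)+1) with h | h
      · rw [if_pos h, if_pos (by rw [h])]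
        ring
      · rw [if_neg h, if_neg (fun hc => h hc.symm)]
        ring

lemma cnt_last (x : ZMod k) (hk : 1 ≤ k) [NeZero k] : cnt k (k - 1) x = 1 := by
  unfold cnt
  have hkk : k - 1 + 1 = k := by omega
  rw [hkk]
  have : (Finset.range k).filter (fun i => ((i:ℕ) : ZMod k) = x) = {x.val} := by
    ext i
    simp only [Finset.mem_filter, Finset.mem_range, Finset.mem_singleton]
    constructor
    · rintro ⟨h1, h2⟩
      rw [← h2, ZMod.val_cast_of_lt h1]
    · rintro rfl
      exact ⟨ZMod.val_lt x, ZMod.natCast_rightInverse x⟩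
  rw [this, Finset.card_singleton]

/-- value of the full witness word -/
lemma lamp_Wfull (c : ℕ) (hk : 1 ≤ k) [NeZero k] (x : ZMod k) :
    lamp k 0 (W' (c+1) (k-1) ++ Ue (k-1)) x = (c : ZMod k) := by
  rw [lamp_append, lamp_W' c (k-1) x, cnt_last x hk, lamp_rep_uM]
  have hbt : bt k 0 (W' (c+1) (k-1)) (Ue (k-1)) x = 0 := by
    unfold bt
    rw [getLast?_W' c (k-1)]
    cases hn : (Ue (k-1)).head? with
    | none => simp
    | some b =>
        have hb : b = uM := by
          rcases Nat.eq_zero_or_pos (k-1) with h0 | hpos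
          · rw [h0] at hn; simp [Ue] at hn
          · obtain ⟨m, hm⟩ := Nat.exists_eq_succ_of_ne_zero (Nat.pos_iff_ne_zero.1 hpos)
            rw [hm] at hn
            simp [Ue, List.replicate_succ] at hn
            exact hn.symm
        rw [hb]
        simp
  rw [hbt]
  simp

lemma AW_Wfull (c : ℕ) : AW k (W' (c+1) (k-1) ++ Ue (k-1)) = 0 := by
  rw [AW_append, AW_W', AW_Ue]
  ring

-- ## the witness as a free group element

lemma flat_rep_singleton {α : Type*} (n : ℕ) (x : α) :
    List.flatten (List.replicate n [x]) = List.replicate n x := by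
  induction n with
  | zero => rfl
  | succ n ih => rw [List.replicate_succ, List.flatten_cons, ih, List.replicate_succ]; rfl

lemma of_pow (a : Fin 2) (n : ℕ) :
    (FreeGroup.of a) ^ n = FreeGroup.mk (List.replicate n (a, true)) := by
  rw [FreeGroup.of, pow_mk, flat_rep_singleton]

lemma rv_flatten (c : ℕ) : ∀ j, Rv c ++ List.flatten (List.replicate j (uP :: Rv c)) = W' c j
  | 0 => by simp [W']
  | j + 1 => by
      rw [List.replicate_succ', List.flatten_append, W', ← rv_flatten c j]
      simp

lemma m_eq (c j : ℕ) :
    (FreeGroup.of 1) ^ c * (FreeGroup.of 0 * (FreeGroup.of 1) ^ c) ^ j * ((FreeGroup.of 0) ^ j)⁻¹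
      = FreeGroup.mk (W' c j ++ Ue j) := by
  rw [of_pow, of_pow]
  have h1 : (FreeGroup.of (0 : Fin 2)) * FreeGroup.mk (List.replicate c ((1 : Fin 2), true))
      = FreeGroup.mk (uP :: Rv c) := by
    rw [FreeGroup.of, mul_mk]
    rfl
  rw [h1, pow_mk, inv_mk]
  have h2 : invRev (List.replicate j ((0 : Fin 2), true)) = Ue j := by
    simp [invRev, List.map_replicate, List.reverse_replicate, Ue, uM]
  rw [h2, mul_mk, mul_mk]
  congr 1
  rw [← rv_flatten c j]
  rfl

lemma toWord_m (c j : ℕ) :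
    (FreeGroup.mk (W' (c+1) j ++ Ue j)).toWord = W' (c+1) j ++ Ue j := by
  rw [toWord_mk]
  exact reduce_eq_self_of_isRed (isRed_W'Ue c j j)

lemma gw_m_moves (c : ℕ) (hk : 1 ≤ k) [NeZero k]
    (hc : ((c + 1 : ℕ) : ZMod k) ≠ 1) (z : ZMod k × ZMod k) :
    gw k (FreeGroup.mk (W' (c+1) (k-1) ++ Ue (k-1))) z ≠ z := by
  rw [gw_apply, toWord_m c (k-1)]
  rw [AW_Wfull, add_zero]
  intro hcon
  have h2 := congrArg Prod.snd hcon
  simp only [] at h2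
  rw [lamp_Wfull c hk z.1] at h2
  have : (c : ZMod k) = 0 := by
    have := add_eq_left.1 h2
    exact this
  apply hc
  push_cast
  rw [this]
  ring

-- ## dH lemmas

lemma dH_nonneg {n N : ℕ} (σ : Equiv.Perm (Fin n)) (τ : Equiv.Perm (Fin N)) : 0 ≤ dH σ τ := by
  unfold dH
  positivity

lemma dH_le_one {n N : ℕ} (σ : Equiv.Perm (Fin n)) (τ : Equiv.Perm (Fin N)) : dH σ τ ≤ 1 := by
  unfold dH
  rcases Nat.eq_zero_or_pos (max n N) with h | h
  · rw [h]
    simp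
  · rw [div_le_one (by exact_mod_cast h)]
    exact_mod_cast le_trans (Finset.card_filter_le _ _) (le_of_eq (Finset.card_range _))

lemma permExt_ne_iff {n : ℕ} (σ τ : Equiv.Perm (Fin n)) {x : ℕ} (h : x < n) :
    (permExt σ x ≠ permExt τ x) ↔ σ ⟨x, h⟩ ≠ τ ⟨x, h⟩ := by
  unfold permExt
  rw [dif_pos h, dif_pos h]
  simp [Fin.val_inj]

/-- transport the disagreement count through an equivalence -/
lemma card_perm_ne {n : ℕ} {α : Type*} [Fintype α] [DecidableEq α] (e : α ≃ Fin n)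
    (σ τ : Equiv.Perm α) :
    ((Finset.range n).filter fun x => permExt (e.permCongr σ) x ≠ permExt (e.permCongr τ) x).card
      = (Finset.univ.filter fun z : α => σ z ≠ τ z).card := by
  have step1 : ((Finset.range n).filter fun x => permExt (e.permCongr σ) x ≠ permExt (e.permCongr τ) x)
      = (Finset.univ.filter fun i : Fin n => (e.permCongr σ) i ≠ (e.permCongr τ) i).image Fin.val := by
    ext x
    simp only [Finset.mem_filter, Finset.mem_range, Finset.mem_image, Finset.mem_univ, true_and]
    constructor
    · rintro ⟨h1, h2⟩
      exact ⟨⟨x, h1⟩, (permExt_ne_iff _ _ h1).1 h2, rfl⟩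
    · rintro ⟨i, hi, rfl⟩
      refine ⟨i.isLt, (permExt_ne_iff _ _ i.isLt).2 ?_⟩
      simpa using hi
  rw [step1, Finset.card_image_of_injective _ Fin.val_injective]
  apply Finset.card_bij' (i := fun i _ => e.symm i) (j := fun z _ => e z)
  · intro i hi
    simp only [Finset.mem_filter, Finset.mem_univ, true_and, Equiv.permCongr_apply] at hi ⊢
    exact fun hcon => (Finset.mem_filter.1 hi).2 (by rw [hcon])
  · intro z hz
    simp only [Finset.mem_filter, Finset.mem_univ, true_and, Equiv.permCongr_apply,
      Equiv.symm_apply_apply] at hz ⊢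
    exact Finset.mem_filter.2 ⟨Finset.mem_univ _, by
      simp only [Equiv.permCongr_apply, Equiv.symm_apply_apply]; exact fun hcon => hz (e.injective hcon)⟩
  · intro i _; simp
  · intro z _; simp

lemma permCongr_mul {n : ℕ} {α : Type*} (e : α ≃ Fin n) (σ τ : Equiv.Perm α) :
    (e.permCongr σ) * (e.permCongr τ) = e.permCongr (σ * τ) := by
  ext x
  simp [Equiv.permCongr_apply, Equiv.Perm.mul_apply]

-- ## The map `f` and its defect

noncomputable def ee (k : ℕ) [NeZero k] : (ZMod k × ZMod k) ≃ Fin (k ^ 2) :=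
  Fintype.equivFinOfCardEq (by rw [Fintype.card_prod, ZMod.card]; ring)

noncomputable def ff (k : ℕ) [NeZero k] {Γ : Type*} [Group Γ] (π : Γ →* FreeGroup (Fin 2)) :
    Γ → Equiv.Perm (Fin (k ^ 2)) := fun γ => (ee k).permCongr (gw k (π γ))

lemma defect_bound {k : ℕ} [NeZero k] {Γ : Type*} [Group Γ] (π : Γ →* FreeGroup (Fin 2))
    (γ₁ γ₂ : Γ) :
    dH (ff k π (γ₁ * γ₂)) (ff k π γ₁ * ff k π γ₂) ≤ 2 / (k : ℝ) := by
  have hk0 : 0 < k := Nat.pos_of_ne_zero (NeZero.ne k)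
  have h1 : ff k π (γ₁ * γ₂) = (ee k).permCongr (gw k (π γ₁ * π γ₂)) := by
    unfold ff; rw [π.map_mul]
  have h2 : ff k π γ₁ * ff k π γ₂ = (ee k).permCongr (gw k (π γ₁) * gw k (π γ₂)) :=
    permCongr_mul (ee k) _ _
  unfold dH
  rw [max_self, h1, h2, card_perm_ne]
  obtain ⟨c₀, hc₀⟩ := gw_defect (k := k) (π γ₁) (π γ₂)
  have hsub : (Finset.univ.filter fun z : ZMod k × ZMod k =>
        gw k (π γ₁ * π γ₂) z ≠ (gw k (π γ₁) * gw k (π γ₂)) z)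
      ⊆ (Finset.univ.filter fun z : ZMod k × ZMod k => z.1 = c₀) := by
    intro z hz
    rw [Finset.mem_filter] at hz ⊢
    exact ⟨Finset.mem_univ _, hc₀ z hz.2⟩
  have hcard : (Finset.univ.filter fun z : ZMod k × ZMod k => z.1 = c₀).card = k := by
    have himg : (Finset.univ.filter fun z : ZMod k × ZMod k => z.1 = c₀)
        = Finset.image (fun y : ZMod k => (c₀, y)) Finset.univ := by
      ext z
      simp only [Finset.mem_filter, Finset.mem_univ, true_and, Finset.mem_image]
      constructor
      · intro h
        refine ⟨z.2, ?_⟩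
        obtain ⟨z1, z2⟩ := z
        cases h
        rfl
      · rintro ⟨y, rfl⟩
        rfl
    rw [himg, Finset.card_image_of_injective _ (fun a b hab => congrArg Prod.snd hab),
      Finset.card_univ, ZMod.card]
  have hle : ((Finset.univ.filter fun z : ZMod k × ZMod k =>
      gw k (π γ₁ * π γ₂) z ≠ (gw k (π γ₁) * gw k (π γ₂)) z).card : ℝ) ≤ (k : ℝ) := by
    exact_mod_cast le_trans (Finset.card_le_card hsub) (le_of_eq hcard)
  have hden : ((k ^ 2 : ℕ) : ℝ) = (k : ℝ) ^ 2 := by push_cast; ring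
  rw [hden, div_le_div_iff₀ (by positivity) (by exact_mod_cast hk0)]
  have hkR : (1 : ℝ) ≤ (k : ℝ) := by exact_mod_cast hk0
  nlinarith [hle]

lemma dH_one_of_moves {kk N : ℕ} (hN : kk ≤ N) (hNpos : 0 < N) (σ : Equiv.Perm (Fin kk))
    (hσ : ∀ i, σ i ≠ i) : dH σ (1 : Equiv.Perm (Fin N)) = 1 := by
  unfold dH
  rw [max_eq_right hN]
  have hfil : (Finset.range N).filter
      (fun x => permExt σ x ≠ permExt (1 : Equiv.Perm (Fin N)) x) = Finset.range N := by
    rw [Finset.filter_eq_self]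
    intro x hx
    have hxN : x < N := Finset.mem_range.1 hx
    by_cases hxk : x < kk
    · unfold permExt
      rw [dif_pos hxk, dif_pos hxN]
      simp only [ne_eq, Option.some.injEq, Equiv.Perm.one_apply]
      intro hcon
      exact hσ ⟨x, hxk⟩ (Fin.val_inj.1 hcon)
    · unfold permExt
      rw [dif_neg hxk, dif_pos hxN]
      simp
  rw [hfil, Finset.card_range, div_self (by exact_mod_cast hNpos.ne')]

end Stmt3Aux

/-- a group surjecting onto the free group `F₂` is not uniformly flexibly
stable. -/
theorem statement3 {Γ : Type*} [Group Γ] (π : Γ →* FreeGroup (Fin 2))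
    (hπ : Function.Surjective π) :
    ∀ k : ℕ, 1 ≤ k →
      ∃ f : Γ → Equiv.Perm (Fin (k ^ 2)),
        defectInfty f ≤ 2 / (k : ℝ) ∧
        ∀ N : ℕ, k ^ 2 ≤ N → ∀ h : Γ →* Equiv.Perm (Fin N),
          dInfty f (fun γ => h γ) ≥ 1 - 5 / (k : ℝ) := by
  intro k hk
  haveI : NeZero k := ⟨by omega⟩
  refine ⟨Stmt3Aux.ff k π, ?_, ?_⟩
  · -- defect bound
    unfold defectInfty
    apply ciSup_le
    intro p
    exact Stmt3Aux.defect_bound π p.1 p.2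
  · -- lower bound against any homomorphism
    intro N hN h
    have hk2N : 1 ≤ k ^ 2 := Nat.one_le_pow _ _ (by omega)
    have hNpos : 0 < N := lt_of_lt_of_le (by omega) hN
    rw [ge_iff_le]
    rcases eq_or_lt_of_le hk with hk1 | hk2
    · -- k = 1 : the bound is non-positive
      have hneg : (1 : ℝ) - 5 / (k : ℝ) ≤ 0 := by
        rw [← hk1]; norm_num
      refine le_trans hneg ?_
      unfold dInfty
      exact Real.iSup_nonneg fun γ => Stmt3Aux.dH_nonneg _ _
    · -- k ≥ 2 : use a kernel element
      haveI : Fact (1 < k) := ⟨hk2⟩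
      obtain ⟨tu, htu⟩ := hπ (FreeGroup.of 0)
      obtain ⟨tv, htv⟩ := hπ (FreeGroup.of 1)
      set D := Fintype.card (Equiv.Perm (Fin N)) with hD
      have hD1 : 0 < D := Fintype.card_pos
      set t : ℕ := if ((D : ℕ) : ZMod k) = 1 then 2 else 1 with ht
      have ht1 : 0 < t := by rw [ht]; split <;> norm_num
      have hct : 0 < D * t := Nat.mul_pos hD1 ht1
      set c' := D * t - 1 with hc'
      have hcc : D * t = c' + 1 := by omega
      have hcast : ((c' + 1 : ℕ) : ZMod k) ≠ 1 := by
        rw [← hcc]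
        by_cases hD' : ((D : ℕ) : ZMod k) = 1
        · rw [ht, if_pos hD']
          push_cast
          rw [hD']
          intro hcon
          have h10 : (1 : ZMod k) = 0 := by linear_combination hcon
          exact one_ne_zero h10
        · rw [ht, if_neg hD']
          push_cast
          simpa using hD'
      set δ := tv ^ (D * t) * (tu * tv ^ (D * t)) ^ (k - 1) * (tu ^ (k - 1))⁻¹ with hδ
      have hπδ : π δ = FreeGroup.mk (Stmt3Aux.W' (c' + 1) (k - 1) ++ Stmt3Aux.Ue (k - 1)) := by
        rw [hδ]
        simp only [map_mul, map_pow, map_inv, htu, htv]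
        rw [hcc]
        exact Stmt3Aux.m_eq (c' + 1) (k - 1)
      have hhδ : h δ = 1 := by
        have hvc : h tv ^ (D * t) = 1 := by
          rw [pow_mul, hD, pow_card_eq_one, one_pow]
        rw [hδ]
        simp only [map_mul, map_pow, map_inv, hvc]
        simp
      have hmoves : ∀ i, Stmt3Aux.ff k π δ i ≠ i := by
        intro i hcon
        have h1 : Stmt3Aux.gw k (π δ) ((Stmt3Aux.ee k).symm i) = (Stmt3Aux.ee k).symm i := by
          have h2 := congrArg (Stmt3Aux.ee k).symm hcon
          simpa [Stmt3Aux.ff, Equiv.permCongr_apply] using h2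
        rw [hπδ] at h1
        exact Stmt3Aux.gw_m_moves c' hk hcast _ h1
      have hdH : dH (Stmt3Aux.ff k π δ) (h δ) = 1 := by
        rw [hhδ]
        exact Stmt3Aux.dH_one_of_moves hN hNpos _ hmoves
      have hbdd : BddAbove (Set.range fun γ => dH (Stmt3Aux.ff k π γ) (h γ)) := by
        refine ⟨1, ?_⟩
        rintro _ ⟨γ, rfl⟩
        exact Stmt3Aux.dH_le_one _ _
      have hle2 : dH (Stmt3Aux.ff k π δ) (h δ) ≤ dInfty (Stmt3Aux.ff k π) (fun γ => h γ) := by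
        unfold dInfty
        exact le_ciSup hbdd δ
      have h5 : (1 : ℝ) - 5 / (k : ℝ) ≤ 1 := by
        have : 0 ≤ 5 / (k : ℝ) := by positivity
        linarith
      calc (1 : ℝ) - 5 / (k : ℝ) ≤ 1 := h5
        _ = dH (Stmt3Aux.ff k π δ) (h δ) := hdH.symm
        _ ≤ dInfty (Stmt3Aux.ff k π) (fun γ => h γ) := hle2
end

section
/- Let Γ be a group and f : Γ → Sym(n) a function, n ∈ ℕ. Then there exists a symmetric function f' : Γ → Sym(n) such that d^H(f(γ), f'(γ)) ≤ 2·defect_∞(f) for every γ ∈ Γ, and defect_∞(f') ≤ 7·defect_∞(f). -/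
open Finset

namespace S7aux

variable {n : ℕ}

noncomputable def dH' (σ τ : Equiv.Perm (Fin n)) : ℝ :=
  ((Finset.univ.filter fun x => σ x ≠ τ x).card : ℝ) / n

lemma div_le_div_nn {a b c : ℝ} (h : a ≤ b) (hc : 0 ≤ c) : a / c ≤ b / c := by
  rcases hc.eq_or_lt with rfl | hc
  · simp
  · exact (div_le_div_iff_of_pos_right hc).mpr h

lemma dH_eq (σ τ : Equiv.Perm (Fin n)) : dH σ τ = dH' σ τ := by
  unfold dH dH'
  rw [max_self]
  congr 1
  have : (Finset.range n).filter (fun x => permExt σ x ≠ permExt τ x)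
      = Finset.map Fin.valEmbedding (Finset.univ.filter fun x => σ x ≠ τ x) := by
    ext x
    simp only [Finset.mem_filter, Finset.mem_range, Finset.mem_map, Fin.valEmbedding_apply,
      Finset.mem_univ, true_and]
    constructor
    · rintro ⟨hx, hne⟩
      refine ⟨⟨x, hx⟩, ?_, rfl⟩
      intro h
      apply hne
      simp [permExt, hx, h]
    · rintro ⟨y, hne, rfl⟩
      refine ⟨y.2, ?_⟩
      simp only [permExt, y.2, dif_pos, Fin.eta, ne_eq, Option.some.injEq]
      exact fun h => hne (Fin.val_injective h)
  rw [this, Finset.card_map]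

lemma dH'_nonneg (σ τ : Equiv.Perm (Fin n)) : 0 ≤ dH' σ τ := by
  unfold dH'
  positivity

lemma dH'_le_one (σ τ : Equiv.Perm (Fin n)) : dH' σ τ ≤ 1 := by
  unfold dH'
  rcases Nat.eq_zero_or_pos n with rfl | hn
  · simp
  · rw [div_le_one (by exact_mod_cast hn)]
    exact_mod_cast (Finset.card_filter_le _ _).trans (le_of_eq (by simp))

lemma dH'_self (σ : Equiv.Perm (Fin n)) : dH' σ σ = 0 := by
  unfold dH'; simp

lemma dH'_comm (σ τ : Equiv.Perm (Fin n)) : dH' σ τ = dH' τ σ := by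
  unfold dH'
  have : (Finset.univ.filter fun x => σ x ≠ τ x) = (Finset.univ.filter fun x => τ x ≠ σ x) := by
    ext x; simp [ne_comm]
  rw [this]

lemma dH'_left (α σ τ : Equiv.Perm (Fin n)) : dH' (α * σ) (α * τ) = dH' σ τ := by
  unfold dH'
  have : (Finset.univ.filter fun x => (α * σ) x ≠ (α * τ) x)
      = (Finset.univ.filter fun x => σ x ≠ τ x) := by
    ext x
    simp [Equiv.Perm.mul_apply, EmbeddingLike.apply_eq_iff_eq]
  rw [this]

lemma dH'_right (σ τ α : Equiv.Perm (Fin n)) : dH' (σ * α) (τ * α) = dH' σ τ := by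
  unfold dH'
  have : (Finset.univ.filter fun x => (σ * α) x ≠ (τ * α) x)
      = Finset.map α.symm.toEmbedding (Finset.univ.filter fun x => σ x ≠ τ x) := by
    ext x
    simp only [Finset.mem_filter, Finset.mem_univ, true_and, Finset.mem_map,
      Equiv.coe_toEmbedding, Equiv.Perm.mul_apply]
    constructor
    · intro h
      exact ⟨α x, (Finset.mem_filter.mp h).2, α.symm_apply_apply x⟩
    · rintro ⟨y, h, rfl⟩
      exact Finset.mem_filter.mpr ⟨Finset.mem_univ _, by simpa using h⟩
  rw [this, Finset.card_map]

lemma dH'_triangle (σ τ ρ : Equiv.Perm (Fin n)) : dH' σ ρ ≤ dH' σ τ + dH' τ ρ := by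
  unfold dH'
  rw [← add_div]
  apply div_le_div_nn _ (by positivity)
  have hsub : (Finset.univ.filter fun x => σ x ≠ ρ x)
      ⊆ (Finset.univ.filter fun x => σ x ≠ τ x) ∪ (Finset.univ.filter fun x => τ x ≠ ρ x) := by
    intro x hx
    simp only [Finset.mem_filter, Finset.mem_univ, true_and, Finset.mem_union] at *
    by_contra h
    push_neg at h
    exact hx (h.1.trans h.2)
  calc ((Finset.univ.filter fun x => σ x ≠ ρ x).card : ℝ)
      ≤ (((Finset.univ.filter fun x => σ x ≠ τ x) ∪ (Finset.univ.filter fun x => τ x ≠ ρ x)).card : ℝ) := by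
        exact_mod_cast Finset.card_le_card hsub
    _ ≤ _ := by exact_mod_cast Finset.card_union_le _ _

lemma dH'_inv (σ τ : Equiv.Perm (Fin n)) : dH' σ⁻¹ τ⁻¹ = dH' σ τ := by
  calc dH' σ⁻¹ τ⁻¹ = dH' (τ * σ⁻¹) (τ * τ⁻¹) := (dH'_left τ _ _).symm
    _ = dH' (τ * σ⁻¹ * σ) (1 * σ) := by rw [mul_inv_cancel]; exact (dH'_right _ _ σ).symm
    _ = dH' τ σ := by rw [one_mul]; simp [mul_assoc]
    _ = dH' σ τ := dH'_comm _ _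

def involFun (σ : Equiv.Perm (Fin n)) : Fin n → Fin n :=
  fun x => if σ (σ x) = x then σ x else x

lemma involFun_involutive (σ : Equiv.Perm (Fin n)) : Function.Involutive (involFun σ) := by
  intro x
  unfold involFun
  by_cases h : σ (σ x) = x
  · rw [if_pos h, if_pos (by rw [h]), h]
  · rw [if_neg h, if_neg h]

def invol (σ : Equiv.Perm (Fin n)) : Equiv.Perm (Fin n) :=
  (involFun_involutive σ).toPerm

lemma invol_inv (σ : Equiv.Perm (Fin n)) : (invol σ)⁻¹ = invol σ := by
  apply inv_eq_of_mul_eq_one_right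
  exact Equiv.ext fun x => involFun_involutive σ x

lemma dH'_invol (σ : Equiv.Perm (Fin n)) : dH' σ (invol σ) ≤ dH' (σ * σ) 1 := by
  unfold dH'
  apply div_le_div_nn _ (by positivity)
  have : (Finset.univ.filter fun x => σ x ≠ invol σ x)
      ⊆ (Finset.univ.filter fun x => (σ * σ) x ≠ (1 : Equiv.Perm (Fin n)) x) := by
    intro x hx
    simp only [Finset.mem_filter, Finset.mem_univ, true_and, Equiv.Perm.mul_apply,
      Equiv.Perm.one_apply] at *
    refine Finset.mem_filter.mpr ⟨Finset.mem_univ _, ?_⟩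
    intro h
    apply hx
    have hx2 : invol σ x = σ x := by simp [invol, Function.Involutive.toPerm, involFun, h]
    exact hx2.symm
  exact_mod_cast Finset.card_le_card this

end S7aux

open S7aux

/-- symmetrization for maps into symmetric groups. -/
theorem statement7 {Γ : Type*} [Group Γ] (n : ℕ) (f : Γ → Equiv.Perm (Fin n)) :
    ∃ f' : Γ → Equiv.Perm (Fin n), IsSymmetricMap f' ∧
      (∀ γ : Γ, dH (f γ) (f' γ) ≤ 2 * defectInfty f) ∧
      defectInfty f' ≤ 7 * defectInfty f := by
  classical
  obtain ⟨linst, -⟩ := exists_wellOrder Γ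
  set ε := defectInfty f with hεdef
  have hbdd : BddAbove (Set.range fun p : Γ × Γ => dH (f (p.1 * p.2)) (f p.1 * f p.2)) := by
    refine ⟨1, ?_⟩
    rintro x ⟨p, rfl⟩
    dsimp only
    rw [dH_eq]
    exact dH'_le_one _ _
  have hle : ∀ γ δ : Γ, dH' (f (γ * δ)) (f γ * f δ) ≤ ε := fun γ δ => by
    rw [← dH_eq]
    exact le_ciSup hbdd (γ, δ)
  have hε0 : 0 ≤ ε := le_trans (dH'_nonneg (f (1 * 1)) (f 1 * f 1)) (hle 1 1)
  have e1 : dH' (f 1) (1 : Equiv.Perm (Fin n)) ≤ ε := by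
    have : dH' (f 1) 1 = dH' (f (1 * 1)) (f 1 * f 1) := by
      rw [one_mul]
      calc dH' (f 1) 1 = dH' (f 1 * f 1) (f 1 * 1) := (dH'_left (f 1) _ _).symm
        _ = dH' (f 1 * f 1) (f 1) := by rw [mul_one]
        _ = dH' (f 1) (f 1 * f 1) := dH'_comm _ _
    rw [this]; exact hle 1 1
  have einv : ∀ γ : Γ, dH' (f γ⁻¹) (f γ)⁻¹ ≤ 2 * ε := by
    intro γ
    have h1 : dH' (f γ⁻¹) (f γ)⁻¹ = dH' (f γ * f γ⁻¹) 1 := by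
      rw [← dH'_left (f γ) (f γ⁻¹) (f γ)⁻¹, mul_inv_cancel]
    have h2 : dH' (f γ * f γ⁻¹) 1 ≤ dH' (f γ * f γ⁻¹) (f (γ * γ⁻¹)) + dH' (f (γ * γ⁻¹)) 1 :=
      dH'_triangle _ _ _
    have h3 : dH' (f γ * f γ⁻¹) (f (γ * γ⁻¹)) ≤ ε := (dH'_comm _ _) ▸ hle γ γ⁻¹
    have h4 : dH' (f (γ * γ⁻¹)) 1 ≤ ε := by rw [mul_inv_cancel]; exact e1
    rw [h1]; linarith
  set g : Γ → Equiv.Perm (Fin n) := fun γ =>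
    if γ = 1 then 1
    else if γ⁻¹ = γ then invol (f γ)
    else if γ < γ⁻¹ then f γ else (f γ⁻¹)⁻¹ with hg
  have hA : ∀ γ : Γ, dH' (f γ) (g γ) ≤ 2 * ε := by
    intro γ
    by_cases h1' : γ = 1
    · subst h1'
      simp only [hg, if_pos rfl]
      linarith [e1]
    by_cases h2' : γ⁻¹ = γ
    · simp only [hg, if_neg h1', if_pos h2']
      have hsq : γ * γ = 1 := by nth_rewrite 2 [← h2']; exact mul_inv_cancel γ
      have := dH'_invol (f γ)
      have htri : dH' (f γ * f γ) 1 ≤ dH' (f γ * f γ) (f (γ * γ)) + dH' (f (γ * γ)) 1 :=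
        dH'_triangle _ _ _
      have h3 : dH' (f γ * f γ) (f (γ * γ)) ≤ ε := (dH'_comm _ _) ▸ hle γ γ
      have h4 : dH' (f (γ * γ)) 1 ≤ ε := by rw [hsq]; exact e1
      linarith
    by_cases h3' : γ < γ⁻¹
    · simp only [hg, if_neg h1', if_neg h2', if_pos h3', dH'_self]
      linarith
    · simp only [hg, if_neg h1', if_neg h2', if_neg h3']
      have : dH' (f γ) (f γ⁻¹)⁻¹ = dH' (f γ⁻¹) (f γ)⁻¹ := by
        rw [← dH'_inv (f γ) (f γ⁻¹)⁻¹, inv_inv, dH'_comm]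
      rw [this]; exact einv γ
  have hsym : IsSymmetricMap g := by
    constructor
    · simp only [hg, if_pos rfl]
    · intro γ
      by_cases h1' : γ = 1
      · subst h1'; simp only [hg, inv_one, if_pos rfl]
      by_cases h2' : γ⁻¹ = γ
      · rw [h2']
        simp only [hg, if_neg h1', if_pos h2']
        exact (invol_inv (f γ)).symm
      · have hinv1 : γ⁻¹ ≠ 1 := fun h => h1' (by rwa [inv_eq_one] at h)
        have hinv2 : (γ⁻¹)⁻¹ ≠ γ⁻¹ := by rw [inv_inv]; exact fun h => h2' h.symm
        by_cases h3' : γ < γ⁻¹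
        · have h4' : ¬ γ⁻¹ < (γ⁻¹)⁻¹ := by rw [inv_inv]; exact fun h => lt_asymm h3' h
          simp only [hg, if_neg h1', if_neg h2', if_pos h3', if_neg hinv1, if_neg hinv2,
            if_neg h4', inv_inv]
          rw [if_neg (fun h : γ = γ⁻¹ => h2' h.symm), if_neg (fun h => lt_asymm h3' h)]
        · have h4' : γ⁻¹ < (γ⁻¹)⁻¹ := by
            rw [inv_inv]
            rcases lt_trichotomy γ γ⁻¹ with h | h | h
            · exact absurd h h3'
            · exact absurd h.symm h2'
            · exact h
          simp only [hg, if_neg h1', if_neg h2', if_neg h3', if_neg hinv1, if_neg hinv2,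
            if_pos h4', inv_inv]
          rw [inv_inv] at h4'
          rw [if_neg (fun h : γ = γ⁻¹ => h2' h.symm), if_pos h4']
  refine ⟨g, hsym, ?_, ?_⟩
  · intro γ
    rw [dH_eq]
    exact hA γ
  · rw [defectInfty]
    apply ciSup_le
    rintro ⟨γ, δ⟩
    rw [dH_eq]
    have t1 : dH' (g (γ * δ)) (f (γ * δ)) ≤ 2 * ε := (dH'_comm _ _) ▸ hA (γ * δ)
    have t2 : dH' (f (γ * δ)) (f γ * f δ) ≤ ε := hle γ δ
    have t3 : dH' (f γ * f δ) (f γ * g δ) ≤ 2 * ε := by rw [dH'_left]; exact hA δ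
    have t4 : dH' (f γ * g δ) (g γ * g δ) ≤ 2 * ε := by rw [dH'_right]; exact hA γ
    have tri2 : dH' (f (γ * δ)) (f γ * g δ) ≤ dH' (f (γ * δ)) (f γ * f δ) +
        dH' (f γ * f δ) (f γ * g δ) := dH'_triangle _ _ _
    calc dH' (g (γ * δ)) (g γ * g δ)
        ≤ dH' (g (γ * δ)) (f γ * g δ) + dH' (f γ * g δ) (g γ * g δ) := dH'_triangle _ _ _
      _ ≤ (dH' (g (γ * δ)) (f (γ * δ)) + dH' (f (γ * δ)) (f γ * g δ)) + dH' (f γ * g δ) (g γ * g δ) := by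
          linarith [dH'_triangle (g (γ * δ)) (f (γ * δ)) (f γ * g δ)]
      _ ≤ 7 * ε := by linarith
end

section
/- Let G be a group equipped with a bi-invariant metric d, and suppose there is a real number M₂ ≥ 0 such that for every g ∈ G there exists h ∈ G with h² = 1 and d(g,h) ≤ M₂·d(g²,1). Set C = 2·max{1, M₂}. Let Γ be a group, f : Γ → G a function, and δ ≥ 0 such that d(f(γ₁γ₂), f(γ₁)f(γ₂)) ≤ δ for all γ₁, γ₂ ∈ Γ. Then there exists a symmetric function f' : Γ → G such that d(f(γ), f'(γ)) ≤ C·δ for every γ ∈ Γ, and d(f'(γ₁γ₂), f'(γ₁)f'(γ₂)) ≤ (3C + 1)·δ for all γ₁, γ₂ ∈ Γ. -/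
open Finset

/-- symmetrization in a group with a bi-invariant metric in which approximate
square roots of the identity are close to exact ones. -/
theorem statement8 {G : Type*} [Group G] (d : G → G → ℝ)
    (hd_symm : ∀ g h : G, d g h = d h g)
    (hd_tri : ∀ g h k : G, d g k ≤ d g h + d h k)
    (hd_eq : ∀ g h : G, d g h = 0 ↔ g = h)
    (hd_bi : ∀ a b g h : G, d (a * g * b) (a * h * b) = d g h)
    (M₂ : ℝ) (hM₂ : 0 ≤ M₂)
    (hroot : ∀ g : G, ∃ h : G, h ^ 2 = 1 ∧ d g h ≤ M₂ * d (g ^ 2) 1)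
    {Γ : Type*} [Group Γ] (f : Γ → G) (δ : ℝ) (hδ : 0 ≤ δ)
    (hdef : ∀ γ₁ γ₂ : Γ, d (f (γ₁ * γ₂)) (f γ₁ * f γ₂) ≤ δ) :
    ∃ f' : Γ → G, IsSymmetricMap f' ∧
      (∀ γ : Γ, d (f γ) (f' γ) ≤ (2 * max 1 M₂) * δ) ∧
      (∀ γ₁ γ₂ : Γ, d (f' (γ₁ * γ₂)) (f' γ₁ * f' γ₂) ≤ (3 * (2 * max 1 M₂) + 1) * δ) := by
  classical
  set C : ℝ := 2 * max 1 M₂ with hC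
  have hC1 : (1:ℝ) ≤ C := by
    have h1 : (1:ℝ) ≤ max 1 M₂ := le_max_left 1 M₂
    nlinarith
  have hC2 : (2:ℝ) ≤ C := by
    have h1 : (1:ℝ) ≤ max 1 M₂ := le_max_left 1 M₂
    nlinarith
  have hrefl : ∀ g : G, d g g = 0 := fun g => (hd_eq g g).2 rfl
  have hright : ∀ g h c : G, d (g * c) (h * c) = d g h := fun g h c => by
    simpa using hd_bi 1 c g h
  have hleft : ∀ g h c : G, d (c * g) (c * h) = d g h := fun g h c => by
    simpa using hd_bi c 1 g h
  -- d (f 1) 1 ≤ δ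
  have hf1 : d (f 1) 1 ≤ δ := by
    have h := hdef 1 1
    rw [one_mul] at h
    have h2 : d (f 1) (f 1 * f 1) = d 1 (f 1) := by
      have := hleft 1 (f 1) (f 1)
      simpa using this
    rw [h2, hd_symm] at h
    exact h
  -- d (f γ) (f γ⁻¹)⁻¹ ≤ 2δ
  have hinvb : ∀ γ : Γ, d (f γ) (f γ⁻¹)⁻¹ ≤ 2 * δ := by
    intro γ
    have h1 : d (f (γ * γ⁻¹)) (f γ * f γ⁻¹) ≤ δ := hdef γ γ⁻¹
    rw [mul_inv_cancel] at h1
    have h2 : d (f γ) (f γ⁻¹)⁻¹ = d (f γ * f γ⁻¹) 1 := by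
      have := hright (f γ) (f γ⁻¹)⁻¹ (f γ⁻¹)
      simpa using this.symm
    calc d (f γ) (f γ⁻¹)⁻¹ = d (f γ * f γ⁻¹) 1 := h2
      _ ≤ d (f γ * f γ⁻¹) (f 1) + d (f 1) 1 := hd_tri _ _ _
      _ ≤ δ + δ := add_le_add (by rw [hd_symm]; exact h1) hf1
      _ = 2 * δ := by ring
  -- setoid on Γ identifying γ with γ⁻¹
  let s : Setoid Γ :=
    ⟨fun x y => y = x ∨ y = x⁻¹, by
      refine ⟨fun x => Or.inl rfl, ?_, ?_⟩
      · rintro x y (rfl | rfl)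
        · exact Or.inl rfl
        · right; simp
      · rintro x y z (rfl | rfl) (rfl | rfl)
        · exact Or.inl rfl
        · exact Or.inr rfl
        · right; rfl
        · left; simp⟩
  let rep : Γ → Γ := fun γ => Quotient.out (Quotient.mk s γ)
  have hrep_spec : ∀ γ : Γ, rep γ = γ ∨ rep γ = γ⁻¹ := by
    intro γ
    have h : s.r (rep γ) γ := Quotient.exact (Quotient.out_eq (Quotient.mk s γ) ▸ rfl)
    rcases h with h | h
    · exact Or.inl h.symm
    · exact Or.inr (inv_eq_iff_eq_inv.mpr h).symm
  have hrep_inv : ∀ γ : Γ, rep γ⁻¹ = rep γ := by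
    intro γ
    have : (Quotient.mk s γ⁻¹) = Quotient.mk s γ := Quotient.sound (Or.inr (inv_inv γ).symm)
    simp only [rep, this]
  -- chosen square roots
  let root : Γ → G := fun γ => Classical.choose (hroot (f γ))
  have hroot_sq : ∀ γ : Γ, (root γ) ^ 2 = 1 := fun γ =>
    (Classical.choose_spec (hroot (f γ))).1
  have hroot_d : ∀ γ : Γ, d (f γ) (root γ) ≤ M₂ * d ((f γ) ^ 2) 1 := fun γ =>
    (Classical.choose_spec (hroot (f γ))).2
  -- definition of f'
  let f' : Γ → G := fun γ =>
    if γ = 1 then 1 else if γ⁻¹ = γ then root γ else if rep γ = γ then f γ else (f γ⁻¹)⁻¹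
  have hf'1 : f' 1 = 1 := by simp [f']
  refine ⟨f', ⟨hf'1, ?_⟩, ?_, ?_⟩
  · -- symmetry
    intro γ
    by_cases h1 : γ = 1
    · subst h1; simp [hf'1]
    · have h1' : γ⁻¹ ≠ 1 := by simpa using h1
      by_cases h2 : γ⁻¹ = γ
      · have h2' : (γ⁻¹)⁻¹ = γ⁻¹ := by rw [inv_inv, h2]
        have hsq : root γ * root γ = 1 := by
          have := hroot_sq γ; rwa [sq] at this
        have hr : (root γ)⁻¹ = root γ := by
          rw [inv_eq_iff_mul_eq_one, hsq]
        simp only [f', if_neg h1, if_neg h1', if_pos h2, if_pos h2']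
        rw [h2, hr]
      · have h2' : ¬((γ⁻¹)⁻¹ = γ⁻¹) := by
          rw [inv_inv]; intro h; exact h2 h.symm
        simp only [f', if_neg h1, if_neg h1', if_neg h2, if_neg h2']
        rcases hrep_spec γ with hr | hr
        · have hrinv : rep γ⁻¹ ≠ γ⁻¹ := by
            rw [hrep_inv, hr]; intro h; exact h2 h.symm
          rw [if_pos hr, if_neg hrinv, inv_inv]
        · have hrinv : rep γ⁻¹ = γ⁻¹ := by rw [hrep_inv, hr]
          have hrg : rep γ ≠ γ := by
            rw [hr]; exact h2
          rw [if_neg hrg, if_pos hrinv, inv_inv]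
  · -- pointwise bound
    intro γ
    by_cases h1 : γ = 1
    · subst h1
      rw [hf'1]
      calc d (f 1) 1 ≤ δ := hf1
        _ ≤ C * δ := by nlinarith
    · by_cases h2 : γ⁻¹ = γ
      · simp only [f', if_neg h1, if_pos h2]
        have hgg : γ * γ = 1 :=
          calc γ * γ = γ⁻¹ * γ := by rw [h2]
            _ = 1 := inv_mul_cancel γ
        have hsqb : d ((f γ) ^ 2) 1 ≤ 2 * δ := by
          rw [sq]
          calc d (f γ * f γ) 1 ≤ d (f γ * f γ) (f (γ * γ)) + d (f (γ * γ)) 1 :=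
                hd_tri _ _ _
            _ ≤ δ + δ := by
                refine add_le_add ?_ ?_
                · rw [hd_symm]; exact hdef γ γ
                · rw [hgg]; exact hf1
            _ = 2 * δ := by ring
        calc d (f γ) (root γ) ≤ M₂ * d ((f γ) ^ 2) 1 := hroot_d γ
          _ ≤ M₂ * (2 * δ) := by
              refine mul_le_mul_of_nonneg_left hsqb hM₂
          _ ≤ C * δ := by
              have : M₂ ≤ max 1 M₂ := le_max_right 1 M₂
              nlinarith
      · simp only [f', if_neg h1, if_neg h2]
        by_cases h3 : rep γ = γ
        · rw [if_pos h3, hrefl]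
          nlinarith
        · rw [if_neg h3]
          calc d (f γ) (f γ⁻¹)⁻¹ ≤ 2 * δ := hinvb γ
            _ ≤ C * δ := by nlinarith
  · -- approximate multiplicativity
    intro γ₁ γ₂
    have hclose : ∀ γ : Γ, d (f γ) (f' γ) ≤ C * δ := by
      intro γ
      by_cases h1 : γ = 1
      · subst h1
        rw [hf'1]
        calc d (f 1) 1 ≤ δ := hf1
          _ ≤ C * δ := by nlinarith
      · by_cases h2 : γ⁻¹ = γ
        · simp only [f', if_neg h1, if_pos h2]
          have hgg : γ * γ = 1 :=
            calc γ * γ = γ⁻¹ * γ := by rw [h2]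
              _ = 1 := inv_mul_cancel γ
          have hsqb : d ((f γ) ^ 2) 1 ≤ 2 * δ := by
            rw [sq]
            calc d (f γ * f γ) 1 ≤ d (f γ * f γ) (f (γ * γ)) + d (f (γ * γ)) 1 :=
                  hd_tri _ _ _
              _ ≤ δ + δ := by
                  refine add_le_add ?_ ?_
                  · rw [hd_symm]; exact hdef γ γ
                  · rw [hgg]; exact hf1
              _ = 2 * δ := by ring
          calc d (f γ) (root γ) ≤ M₂ * d ((f γ) ^ 2) 1 := hroot_d γ
            _ ≤ M₂ * (2 * δ) := mul_le_mul_of_nonneg_left hsqb hM₂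
            _ ≤ C * δ := by
                have : M₂ ≤ max 1 M₂ := le_max_right 1 M₂
                nlinarith
        · simp only [f', if_neg h1, if_neg h2]
          by_cases h3 : rep γ = γ
          · rw [if_pos h3, hrefl]
            nlinarith
          · rw [if_neg h3]
            calc d (f γ) (f γ⁻¹)⁻¹ ≤ 2 * δ := hinvb γ
              _ ≤ C * δ := by nlinarith
    calc d (f' (γ₁ * γ₂)) (f' γ₁ * f' γ₂)
        ≤ d (f' (γ₁ * γ₂)) (f (γ₁ * γ₂)) + d (f (γ₁ * γ₂)) (f' γ₁ * f' γ₂) :=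
          hd_tri _ _ _
      _ ≤ d (f' (γ₁ * γ₂)) (f (γ₁ * γ₂)) +
            (d (f (γ₁ * γ₂)) (f γ₁ * f γ₂) + d (f γ₁ * f γ₂) (f' γ₁ * f' γ₂)) := by
          have := hd_tri (f (γ₁ * γ₂)) (f γ₁ * f γ₂) (f' γ₁ * f' γ₂)
          linarith
      _ ≤ d (f' (γ₁ * γ₂)) (f (γ₁ * γ₂)) +
            (d (f (γ₁ * γ₂)) (f γ₁ * f γ₂) +
              (d (f γ₁ * f γ₂) (f' γ₁ * f γ₂) + d (f' γ₁ * f γ₂) (f' γ₁ * f' γ₂))) := by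
          have := hd_tri (f γ₁ * f γ₂) (f' γ₁ * f γ₂) (f' γ₁ * f' γ₂)
          linarith
      _ ≤ C * δ + (δ + (C * δ + C * δ)) := by
          refine add_le_add ?_ (add_le_add (hdef γ₁ γ₂) (add_le_add ?_ ?_))
          · rw [hd_symm]; exact hclose _
          · rw [hright]; exact hclose _
          · rw [hleft]; exact hclose _
      _ = (3 * C + 1) * δ := by ring
end

section
/- Let n ∈ ℕ and σ ∈ Sym(n). Then there exists τ ∈ Sym(n) such that τ² = id and d^H(σ, τ) = d^H(σ², id). -/
open Finset

/-- every permutation is as close to some involution as its square is to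
the identity. -/
theorem statement10 (n : ℕ) (σ : Equiv.Perm (Fin n)) :
    ∃ τ : Equiv.Perm (Fin n), τ ^ 2 = 1 ∧ dH σ τ = dH (σ ^ 2) (1 : Equiv.Perm (Fin n)) := by
  have hinv : ∀ x : Fin n,
      (fun x => if σ (σ x) = x then σ x else x) ((fun x => if σ (σ x) = x then σ x else x) x)
        = x := by
    intro x
    by_cases h : σ (σ x) = x
    · simp only [if_pos h]
      have h2 : σ (σ (σ x)) = σ x := by rw [h]
      simp [if_pos h2, h]
    · simp [if_neg h]
  set τ : Equiv.Perm (Fin n) := ⟨fun x => if σ (σ x) = x then σ x else x,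
      fun x => if σ (σ x) = x then σ x else x, hinv, hinv⟩ with hτ
  refine ⟨τ, ?_, ?_⟩
  · ext x
    simp only [sq, Equiv.Perm.mul_apply, Equiv.Perm.one_apply]
    have := hinv x
    simp only at this
    simp [hτ, Equiv.coe_fn_mk, this]
  · have hset : ((Finset.range (max n n)).filter fun x => permExt σ x ≠ permExt τ x)
        = ((Finset.range (max n n)).filter fun x => permExt (σ ^ 2) x ≠ permExt (1 : Equiv.Perm (Fin n)) x) := by
      refine Finset.filter_congr fun x hx => ?_
      have h : x < n := by simpa [Nat.max_self] using Finset.mem_range.mp hx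
      simp only [permExt, dif_pos h, ne_eq, Option.some_inj, Nat.cast_inj, Fin.val_inj,
        hτ, Equiv.coe_fn_mk, sq, Equiv.Perm.mul_apply, Equiv.Perm.one_apply]
      by_cases hsq : σ (σ ⟨x, h⟩) = ⟨x, h⟩
      · have hv : (σ (σ ⟨x, h⟩) : ℕ) = x := by rw [hsq]
        simp [hsq, hv]
      · rw [if_neg hsq]
        exact iff_of_true (fun heq => hsq (by rw [heq]; exact heq)) (fun hval => hsq (Fin.ext hval))
    unfold dH
    rw [hset]
end

section
/- Let Γ be a group equipped with a left-invariant finitely-additive probability measure m, and let f : Γ → Sym(n) be a symmetric function. Suppose ε₁, ε₂ > 0, x, y, z ∈ [n] and γ₁, γ₂ ∈ Γ satisfy w(x →γ₁→ y) > 1 − ε₁ and w(y →γ₂→ z) > 1 − ε₂. Then w(x →γ₂γ₁→ z) > 1 − ε₁ − ε₂. -/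
open Finset

/-- composition of high-weight edges gives a high-weight edge. -/
theorem statement14 {Γ : Type*} [Group Γ] (m : Set Γ → ℝ)
    (hm : IsFinAddProb m) (hml : LeftInvariant m)
    {n : ℕ} (f : Γ → Equiv.Perm (Fin n)) (hf : IsSymmetricMap f)
    (ε₁ ε₂ : ℝ) (hε₁ : 0 < ε₁) (hε₂ : 0 < ε₂)
    (x y z : Fin n) (γ₁ γ₂ : Γ)
    (h₁ : 1 - ε₁ < weight m f x γ₁ y)
    (h₂ : 1 - ε₂ < weight m f y γ₂ z) :
    1 - ε₁ - ε₂ < weight m f x (γ₂ * γ₁) z := by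
  obtain ⟨hpos, huniv, hadd⟩ := hm
  set T1 := { t : Γ | f t (f (t⁻¹ * γ₁) x) = y } with hT1
  set T2 := { t : Γ | f t (f (t⁻¹ * γ₂) y) = z } with hT2
  set T := { t : Γ | f t (f (t⁻¹ * (γ₂ * γ₁)) x) = z } with hT
  set A := (fun a => γ₂ * a) '' T1 with hA
  have hmA : m A = m T1 := hml γ₂ T1
  have key : ∀ S U : Set Γ, m S + m U - 1 ≤ m (S ∩ U) := by
    intro S U
    have h1 : m S = m (S ∩ U) + m (S \ U) := by
      have hd : Disjoint (S ∩ U) (S \ U) := by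
        rw [Set.disjoint_left]; intro a ha hb; exact hb.2 ha.2
      rw [← hadd _ _ hd, Set.inter_union_diff]
    have h2 : m (S ∪ U) = m (S \ U) + m U := by
      have hd : Disjoint (S \ U) U := by
        rw [Set.disjoint_left]; intro a ha hb; exact ha.2 hb
      rw [← hadd _ _ hd, Set.diff_union_self]
    have h3 := (hpos (S ∪ U)).2
    linarith
  have hmono : ∀ S U : Set Γ, S ⊆ U → m S ≤ m U := by
    intro S U hSU
    have hd : Disjoint S (U \ S) := by
      rw [Set.disjoint_left]; intro a ha hb; exact hb.2 ha
    have : m U = m S + m (U \ S) := by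
      rw [← hadd _ _ hd, Set.union_diff_cancel hSU]
    have := (hpos (U \ S)).1
    linarith
  have hsub : A ∩ T2 ⊆ T := by
    rintro t ⟨⟨a, ha, rfl⟩, ht2⟩
    have ha' : f a (f (a⁻¹ * γ₁) x) = y := ha
    have ht2' : f (γ₂ * a) (f ((γ₂ * a)⁻¹ * γ₂) y) = z := ht2
    have e1 : (γ₂ * a)⁻¹ * (γ₂ * γ₁) = a⁻¹ * γ₁ := by group
    have e2 : (γ₂ * a)⁻¹ * γ₂ = a⁻¹ := by group
    show f (γ₂ * a) (f ((γ₂ * a)⁻¹ * (γ₂ * γ₁)) x) = z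
    rw [e1]
    rw [e2, hf.2 a] at ht2'
    have : f (a⁻¹ * γ₁) x = (f a)⁻¹ y := by
      rw [← ha']; simp
    rw [this]
    exact ht2'
  have h4 : m (A ∩ T2) ≤ m T := hmono _ _ hsub
  have h5 := key A T2
  have hwz : weight m f x (γ₂ * γ₁) z = m T := rfl
  have hw1 : weight m f x γ₁ y = m T1 := rfl
  have hw2 : weight m f y γ₂ z = m T2 := rfl
  rw [hwz]; rw [hw1] at h₁; rw [hw2] at h₂
  linarith
end

section
/- Let Γ be a group, let ℋ be a finite-dimensional complex Hilbert space, let ρ : Γ → U(ℋ) be a unitary representation, let ε > 0 and v ∈ ℋ. If ‖ρ(γ)v − v‖ ≤ ε‖v‖ for every γ ∈ Γ, then there exists u ∈ ℋ such that ρ(γ)u = u for every γ ∈ Γ and ‖u − v‖ ≤ (ε/√2)·‖v‖. -/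
open Submodule InnerProductSpace

set_option maxHeartbeats 1000000 in
/-- a vector which is uniformly almost invariant under a unitary
representation on a finite-dimensional complex Hilbert space is `(ε/√2)`-close to an
invariant vector. -/
theorem statement19 {Γ : Type*} [Group Γ] {H : Type*} [NormedAddCommGroup H]
    [InnerProductSpace ℂ H] [FiniteDimensional ℂ H]
    (ρ : Γ →* (H ≃ₗᵢ[ℂ] H)) (ε : ℝ) (hε : 0 < ε) (v : H)
    (hv : ∀ γ : Γ, ‖ρ γ v - v‖ ≤ ε * ‖v‖) :
    ∃ u : H, (∀ γ : Γ, ρ γ u = u) ∧ ‖u - v‖ ≤ (ε / Real.sqrt 2) * ‖v‖ := by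
  classical
  letI : InnerProductSpace ℝ H := InnerProductSpace.complexToReal
  -- the invariant subspace
  let K : Submodule ℂ H :=
    { carrier := {x | ∀ γ : Γ, ρ γ x = x}
      add_mem' := fun hx hy => by intro γ; simp [map_add, hx γ, hy γ]
      zero_mem' := fun γ => map_zero _
      smul_mem' := fun c x hx => by intro γ; simp [map_smul, hx γ] }
  haveI : HasOrthogonalProjection K := inferInstance
  set u : H := (orthogonalProjection K v : H) with hu
  have huK : u ∈ K := (orthogonalProjection K v).2
  have hufix : ∀ γ : Γ, ρ γ u = u := huK
  refine ⟨u, hufix, ?_⟩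
  set w : H := v - u with hwdef
  have hwmem : w ∈ Kᗮ := sub_starProjection_mem_orthogonal v
  have hnorm : ‖u - v‖ = ‖w‖ := by rw [hwdef, norm_sub_rev]
  rw [hnorm]
  -- `ρ γ w - w = ρ γ v - v`
  have hdiff : ∀ γ : Γ, ρ γ w - w = ρ γ v - v := by
    intro γ
    simp only [hwdef, map_sub, hufix γ]
    abel
  have key : 2 * ‖w‖ ^ 2 ≤ ε ^ 2 * ‖v‖ ^ 2 := by
    by_contra hcon
    push_neg at hcon
    have hw0 : 0 < ‖w‖ := by nlinarith [norm_nonneg w, sq_nonneg (ε * ‖v‖), mul_pow ε ‖v‖ 2]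
    set δ : ℝ := ‖w‖ ^ 2 - ε ^ 2 * ‖v‖ ^ 2 / 2 with hδ
    have hδpos : 0 < δ := by simp only [hδ]; nlinarith
    -- every element of the orbit of `w` has real inner product `≥ δ` with `w`
    have horb : ∀ γ : Γ, δ ≤ ⟪ρ γ w, w⟫_ℝ := by
      intro γ
      have h1 : ‖ρ γ w - w‖ ≤ ε * ‖v‖ := by rw [hdiff γ]; exact hv γ
      have h2 : ‖ρ γ w - w‖ ^ 2 ≤ (ε * ‖v‖) ^ 2 :=
        pow_le_pow_left₀ (norm_nonneg _) h1 2
      have h3 : ‖ρ γ w - w‖ ^ 2 = ‖ρ γ w‖ ^ 2 - 2 * ⟪ρ γ w, w⟫_ℝ + ‖w‖ ^ 2 :=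
        norm_sub_sq_real _ _
      have h4 : ‖ρ γ w‖ = ‖w‖ := (ρ γ).norm_map w
      rw [h4] at h3
      simp only [hδ]
      nlinarith [h2, h3, mul_pow ε ‖v‖ 2]
    set S : Set H := Set.range (fun γ : Γ => ρ γ w) with hS
    set C : Set H := closure (convexHull ℝ S) with hC
    have hSsub : ∀ x ∈ S, x ∈ (Kᗮ : Set H) := by
      rintro x ⟨γ, rfl⟩
      intro k hk
      have : ⟪ρ γ ((ρ γ⁻¹) k), ρ γ w⟫_ℂ = ⟪(ρ γ⁻¹) k, w⟫_ℂ := (ρ γ).inner_map_map _ _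
      have hfix : (ρ γ⁻¹) k = k := hk γ⁻¹
      rw [hfix, hk γ] at this
      rw [this]
      exact hwmem k hk
    -- every element of C has real inner product ≥ δ with w
    have hlin : IsLinearMap ℝ (fun x : H => ⟪x, w⟫_ℝ) :=
      ⟨fun a b => inner_add_left a b w, fun c x => real_inner_smul_left x w c⟩
    have hTconv : Convex ℝ {x : H | δ ≤ ⟪x, w⟫_ℝ} := convex_halfSpace_ge hlin δ
    have hTclosed : IsClosed {x : H | δ ≤ ⟪x, w⟫_ℝ} := by
      have hcont : Continuous (fun x : H => ⟪x, w⟫_ℝ) :=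
        (continuous_id.inner continuous_const)
      exact isClosed_le continuous_const hcont
    have hCT : C ⊆ {x : H | δ ≤ ⟪x, w⟫_ℝ} := by
      apply closure_minimal _ hTclosed
      apply convexHull_min _ hTconv
      rintro x ⟨γ, rfl⟩
      exact horb γ
    -- C is contained in Kᗮ
    have hCorth : C ⊆ (Kᗮ : Set H) := by
      apply closure_minimal _ Kᗮ.closed_of_finiteDimensional
      apply convexHull_min hSsub
      have := (Kᗮ.restrictScalars ℝ).convex
      simpa using this
    -- minimal-norm point of C
    have hCne : C.Nonempty := ⟨ρ 1 w, subset_closure (subset_convexHull ℝ S ⟨1, rfl⟩)⟩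
    have hCconv : Convex ℝ C := (convex_convexHull ℝ S).closure
    have hCcomp : IsComplete C := isClosed_closure.isComplete
    obtain ⟨c, hcC, hcmin⟩ := exists_norm_eq_iInf_of_complete_convex hCne hCcomp hCconv 0
    -- characterization of the minimizer
    have hchar : ∀ d ∈ C, (‖(0 : H) - d‖ = ⨅ x : C, ‖(0 : H) - x‖) →
        ∀ x ∈ C, ‖d‖ ^ 2 ≤ ⟪d, x⟫_ℝ := by
      intro d hd hmin x hx
      have := (norm_eq_iInf_iff_real_inner_le_zero hCconv hd).mp hmin x hx
      have h' : ⟪-d, x - d⟫_ℝ ≤ 0 := by simpa using this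
      rw [inner_neg_left, inner_sub_right, real_inner_self_eq_norm_sq] at h'
      linarith
    -- c is invariant
    have hcfix : ∀ γ : Γ, ρ γ c = c := by
      intro γ
      set c' : H := ρ γ c with hc'
      have hmapS : (fun x => ρ γ x) '' S = S := by
        ext x
        constructor
        · rintro ⟨y, ⟨γ', rfl⟩, rfl⟩
          exact ⟨γ * γ', by simp [map_mul]⟩
        · rintro ⟨γ', rfl⟩
          exact ⟨ρ (γ⁻¹ * γ') w, ⟨γ⁻¹ * γ', rfl⟩, by simp [map_mul]⟩
      have hmapC : (fun x => ρ γ x) '' C = C := by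
        have h1 : (fun x => ρ γ x) '' C = closure ((fun x => ρ γ x) '' (convexHull ℝ S)) :=
          (ρ γ).toHomeomorph.image_closure _
        have h2 : (fun x => ρ γ x) '' (convexHull ℝ S) = convexHull ℝ ((fun x => ρ γ x) '' S) := by
          have hlm : IsLinearMap ℝ (fun x : H => ρ γ x) :=
            ⟨fun a b => map_add _ a b, fun m x => (ρ γ).toLinearEquiv.map_smul_of_tower m x⟩
          exact hlm.image_convexHull S
        rw [h1, h2, hmapS]
      have hc'C : c' ∈ C := by
        rw [← hmapC]; exact ⟨c, hcC, rfl⟩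
      have hnc' : ‖c'‖ = ‖c‖ := (ρ γ).norm_map c
      have hmin' : ‖(0 : H) - c'‖ = ⨅ x : C, ‖(0 : H) - x‖ := by
        rw [zero_sub, norm_neg, hnc', ← norm_neg c, ← zero_sub]
        exact hcmin
      have h1 : ‖c‖ ^ 2 ≤ ⟪c, c'⟫_ℝ := hchar c hcC hcmin c' hc'C
      have h2 : ‖c'‖ ^ 2 ≤ ⟪c', c⟫_ℝ := hchar c' hc'C hmin' c hcC
      have h3 : ⟪c', c⟫_ℝ = ⟪c, c'⟫_ℝ := real_inner_comm _ _
      have h4 : ‖c - c'‖ ^ 2 = ‖c‖ ^ 2 - 2 * ⟪c, c'⟫_ℝ + ‖c'‖ ^ 2 := norm_sub_sq_real _ _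
      have h5 : ‖c - c'‖ ^ 2 ≤ 0 := by rw [h4, hnc']; nlinarith
      have h6 : c - c' = 0 := by
        have := sq_nonneg ‖c - c'‖
        have : ‖c - c'‖ ^ 2 = 0 := le_antisymm h5 this
        have : ‖c - c'‖ = 0 := by nlinarith [norm_nonneg (c - c')]
        exact norm_eq_zero.mp this
      exact (sub_eq_zero.mp h6).symm
    -- c ∈ K and c ∈ Kᗮ, hence c = 0
    have hcK : c ∈ K := hcfix
    have hcO : c ∈ Kᗮ := hCorth hcC
    have hc0 : c = 0 := by
      have := hcO c hcK
      exact inner_self_eq_zero.mp this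
    have : δ ≤ ⟪c, w⟫_ℝ := hCT hcC
    rw [hc0] at this
    simp only [inner_zero_left] at this
    linarith
  -- conclude
  have h2 : (0 : ℝ) < Real.sqrt 2 := by positivity
  rw [div_mul_eq_mul_div, le_div_iff₀ h2, mul_comm ‖w‖ (Real.sqrt 2)]
  nlinarith [key, Real.sq_sqrt (by norm_num : (0:ℝ) ≤ 2), Real.sqrt_nonneg 2,
    norm_nonneg w, norm_nonneg v, mul_nonneg hε.le (norm_nonneg v),
    sq_nonneg (Real.sqrt 2 * ‖w‖ - ε * ‖v‖)]
end
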